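/- arXiv:2510.25450 — 10 statements merged into one kernel-verified Lean document; each statement's English description precedes it below -/
import Mathlib

section
/- Let A, B, C be abelian categories, F : A ⥤ C a right exact functor, and G : B ⥤ C a left exact functor. Then the comma category Comma F G is an abelian category. -/
open CategoryTheory CategoryTheory.Limits


noncomputable section CommaAbelianAux
namespace CommaAbelianAux
open CategoryTheory.Abelian

variable {C D : Type*} [Category C] [Category D]
  [HasZeroMorphisms C] [HasZeroMorphisms D]
  [HasKernels C] [HasCokernels C] [HasKernels D] [HasCokernels D]
  (H : C ⥤ D) [H.PreservesZeroMorphisms]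
  [PreservesFiniteLimits H] [PreservesFiniteColimits H]
  {P Q : C} (f : P ⟶ Q)

/-- The abelian coimage is preserved. -/
def coimageObjIso : H.obj (Abelian.coimage f) ≅ Abelian.coimage (H.map f) :=
  PreservesCokernel.iso H _ ≪≫
    cokernel.mapIso _ _ (PreservesKernel.iso H _) (Iso.refl _)
      (by
        dsimp
        simp only [Category.comp_id, PreservesKernel.iso_hom]
        exact (kernelComparison_comp_ι _ H).symm)

/-- The abelian image is preserved. -/
def imageObjIso : H.obj (Abelian.image f) ≅ Abelian.image (H.map f) :=
  PreservesKernel.iso H _ ≪≫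
    kernel.mapIso _ _ (Iso.refl _) (PreservesCokernel.iso H _)
      (by
        apply (cancel_mono (PreservesCokernel.iso H f).inv).1
        simp only [Category.assoc, Iso.hom_inv_id]
        dsimp
        simp only [PreservesCokernel.iso_inv, Category.id_comp, Category.comp_id]
        exact (π_comp_cokernelComparison _ H).symm)

theorem map_coimageImageComparison :
    coimageImageComparison (H.map f) =
      (coimageObjIso H f).inv ≫ H.map (coimageImageComparison f) ≫ (imageObjIso H f).hom := by
  ext
  dsimp
  dsimp [imageObjIso, coimageObjIso, cokernel.mapIso, kernel.mapIso, cokernel.map, kernel.map]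
  simp only [coimage_image_factorisation, PreservesKernel.iso_hom, Category.assoc,
    kernel.lift_ι, Category.comp_id, PreservesCokernel.iso_inv,
    cokernel.π_desc_assoc, Category.id_comp]
  erw [kernelComparison_comp_ι _ H, π_comp_cokernelComparison_assoc _ H]
  simp only [← Functor.map_comp]
  congr 1
  exact (coimage_image_factorisation f).symm

theorem map_coimageImageComparison' :
    H.map (coimageImageComparison f) =
      (coimageObjIso H f).hom ≫ coimageImageComparison (H.map f) ≫ (imageObjIso H f).inv := by
  simp only [map_coimageImageComparison, Iso.hom_inv_id_assoc, Iso.hom_inv_id, Category.assoc,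
    Category.comp_id]

end CommaAbelianAux


namespace CommaAbelianAux

section Preadditive
variable {A B C : Type*} [Category A] [Category B] [Category C]
  [Preadditive A] [Preadditive B] [Preadditive C]
  (F : A ⥤ C) [F.Additive] (G : B ⥤ C) [G.Additive]

instance commaHomAdd {X Y : Comma F G} : Add (X ⟶ Y) :=
  ⟨fun φ ψ => ⟨φ.left + ψ.left, φ.right + ψ.right, by
    simp [Functor.map_add, Preadditive.add_comp, Preadditive.comp_add, φ.w, ψ.w]⟩⟩

instance commaHomZero {X Y : Comma F G} : Zero (X ⟶ Y) :=
  ⟨⟨0, 0, by simp⟩⟩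

instance commaHomNeg {X Y : Comma F G} : Neg (X ⟶ Y) :=
  ⟨fun φ => ⟨-φ.left, -φ.right, by
    simp [Functor.map_neg, Preadditive.neg_comp, Preadditive.comp_neg, φ.w]⟩⟩

instance commaHomGroup {X Y : Comma F G} : AddCommGroup (X ⟶ Y) where
  add := (· + ·)
  zero := 0
  neg := Neg.neg
  nsmul := nsmulRec
  zsmul := zsmulRec
  add_assoc a b c := by apply CommaMorphism.ext <;> apply add_assoc
  zero_add a := by apply CommaMorphism.ext <;> apply zero_add
  add_zero a := by apply CommaMorphism.ext <;> apply add_zero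
  neg_add_cancel a := by apply CommaMorphism.ext <;> apply neg_add_cancel
  add_comm a b := by apply CommaMorphism.ext <;> apply add_comm
  sub_eq_add_neg a b := by apply CommaMorphism.ext <;> apply sub_eq_add_neg

@[simp] lemma add_left {X Y : Comma F G} (φ ψ : X ⟶ Y) :
    (φ + ψ).left = φ.left + ψ.left := rfl
@[simp] lemma add_right {X Y : Comma F G} (φ ψ : X ⟶ Y) :
    (φ + ψ).right = φ.right + ψ.right := rfl
@[simp] lemma zero_left {X Y : Comma F G} : (0 : X ⟶ Y).left = 0 := rfl
@[simp] lemma zero_right {X Y : Comma F G} : (0 : X ⟶ Y).right = 0 := rfl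

instance commaPreadditive : Preadditive (Comma F G) where
  add_comp _ _ _ f f' g := by
    apply CommaMorphism.ext <;> simp [Preadditive.add_comp]
  comp_add _ _ _ f g g' := by
    apply CommaMorphism.ext <;> simp [Preadditive.comp_add]

instance fstAdditive : (Comma.fst F G).Additive where
  map_add := rfl

instance sndAdditive : (Comma.snd F G).Additive where
  map_add := rfl

end Preadditive

end CommaAbelianAux


namespace CommaAbelianAux

section Projections
variable {A B C : Type*} [Category A] [Category B] [Category C]
  (F : A ⥤ C) (G : B ⥤ C)

theorem isIso_of_components {X Y : Comma F G} (φ : X ⟶ Y)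
    [IsIso φ.left] [IsIso φ.right] : IsIso φ := by
  have : φ = (Comma.isoMk (asIso φ.left) (asIso φ.right) φ.w).hom := by
    apply CommaMorphism.ext <;> rfl
  rw [this]
  infer_instance

variable {J : Type*} [Category J]

theorem fst_preservesLimit (K : J ⥤ Comma F G)
    [HasLimit (K ⋙ Comma.fst F G)] [HasLimit (K ⋙ Comma.snd F G)]
    [PreservesLimit (K ⋙ Comma.snd F G) G] :
    PreservesLimit K (Comma.fst F G) :=
  preservesLimit_of_preserves_limit_cone
    (Comma.coneOfPreservesIsLimit K (limit.isLimit (K ⋙ Comma.fst F G))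
      (limit.isLimit (K ⋙ Comma.snd F G)))
    (IsLimit.ofIsoLimit (limit.isLimit (K ⋙ Comma.fst F G))
      (Cones.ext (Iso.refl _) (by intro j; simp [Comma.coneOfPreserves])))

theorem snd_preservesLimit (K : J ⥤ Comma F G)
    [HasLimit (K ⋙ Comma.fst F G)] [HasLimit (K ⋙ Comma.snd F G)]
    [PreservesLimit (K ⋙ Comma.snd F G) G] :
    PreservesLimit K (Comma.snd F G) :=
  preservesLimit_of_preserves_limit_cone
    (Comma.coneOfPreservesIsLimit K (limit.isLimit (K ⋙ Comma.fst F G))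
      (limit.isLimit (K ⋙ Comma.snd F G)))
    (IsLimit.ofIsoLimit (limit.isLimit (K ⋙ Comma.snd F G))
      (Cones.ext (Iso.refl _) (by intro j; simp [Comma.coneOfPreserves])))

theorem fst_preservesColimit (K : J ⥤ Comma F G)
    [HasColimit (K ⋙ Comma.fst F G)] [HasColimit (K ⋙ Comma.snd F G)]
    [PreservesColimit (K ⋙ Comma.fst F G) F] :
    PreservesColimit K (Comma.fst F G) :=
  preservesColimit_of_preserves_colimit_cocone
    (Comma.coconeOfPreservesIsColimit K (colimit.isColimit (K ⋙ Comma.fst F G))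
      (colimit.isColimit (K ⋙ Comma.snd F G)))
    (IsColimit.ofIsoColimit (colimit.isColimit (K ⋙ Comma.fst F G))
      (Cocones.ext (Iso.refl _) (by intro j; simp [Comma.coconeOfPreserves])))

theorem snd_preservesColimit (K : J ⥤ Comma F G)
    [HasColimit (K ⋙ Comma.fst F G)] [HasColimit (K ⋙ Comma.snd F G)]
    [PreservesColimit (K ⋙ Comma.fst F G) F] :
    PreservesColimit K (Comma.snd F G) :=
  preservesColimit_of_preserves_colimit_cocone
    (Comma.coconeOfPreservesIsColimit K (colimit.isColimit (K ⋙ Comma.fst F G))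
      (colimit.isColimit (K ⋙ Comma.snd F G)))
    (IsColimit.ofIsoColimit (colimit.isColimit (K ⋙ Comma.snd F G))
      (Cocones.ext (Iso.refl _) (by intro j; simp [Comma.coconeOfPreserves])))

end Projections

end CommaAbelianAux

/-- Let `A`, `B`, `C` be abelian categories, `F : A ⥤ C` a right exact functor
(preserving finite colimits) and `G : B ⥤ C` a left exact functor (preserving finite
limits). Then the comma category `Comma F G` is an abelian category. -/
theorem comma_abelian {A B C : Type*} [Category A] [Category B] [Category C]
    [Abelian A] [Abelian B] [Abelian C]
    (F : A ⥤ C) [PreservesFiniteColimits F] (G : B ⥤ C) [PreservesFiniteLimits G] :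
    Nonempty (Abelian (Comma F G)) := by
  open CommaAbelianAux in
  -- `F` and `G` are additive
  have hF0 : F.PreservesZeroMorphisms := inferInstance
  have hG0 : G.PreservesZeroMorphisms := inferInstance
  have hFb : PreservesBinaryBiproducts F :=
    preservesBinaryBiproducts_of_preservesBinaryCoproducts F
  have hFa : F.Additive := Functor.additive_of_preservesBinaryBiproducts F
  have hGa : G.Additive := Functor.additive_of_preserves_binary_products G
  -- the comma category has finite limits and colimits
  have hl : HasFiniteLimits (Comma F G) := ⟨fun J _ _ => inferInstance⟩
  have hc : HasFiniteColimits (Comma F G) := ⟨fun J _ _ => inferInstance⟩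
  -- the projections preserve finite limits and colimits
  have hfl : PreservesFiniteLimits (Comma.fst F G) :=
    ⟨fun J _ _ => ⟨fun {K} => fst_preservesLimit F G K⟩⟩
  have hsl : PreservesFiniteLimits (Comma.snd F G) :=
    ⟨fun J _ _ => ⟨fun {K} => snd_preservesLimit F G K⟩⟩
  have hfc : PreservesFiniteColimits (Comma.fst F G) :=
    ⟨fun J _ _ => ⟨fun {K} => fst_preservesColimit F G K⟩⟩
  have hsc : PreservesFiniteColimits (Comma.snd F G) :=
    ⟨fun J _ _ => ⟨fun {K} => snd_preservesColimit F G K⟩⟩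
  -- the coimage-image comparison is an isomorphism
  have key : ∀ {X Y : Comma F G} (φ : X ⟶ Y),
      IsIso (Abelian.coimageImageComparison φ) := by
    intro X Y φ
    have h1 : IsIso (Abelian.coimageImageComparison φ).left := by
      rw [show (Abelian.coimageImageComparison φ).left
          = (Comma.fst F G).map (Abelian.coimageImageComparison φ) from rfl,
        map_coimageImageComparison']
      infer_instance
    have h2 : IsIso (Abelian.coimageImageComparison φ).right := by
      rw [show (Abelian.coimageImageComparison φ).right
          = (Comma.snd F G).map (Abelian.coimageImageComparison φ) from rfl,
        map_coimageImageComparison']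
      infer_instance
    exact isIso_of_components _ _ _
  exact ⟨Abelian.ofCoimageImageComparisonIsIso⟩
end CommaAbelianAux
end

section
/- Let Comma F G be abelian as in the main theorem (A, B, C abelian, F right exact, G left exact). If a morphism (f,g) in Comma F G is a monomorphism, then f is a monomorphism in A and g is a monomorphism in B. -/
open CategoryTheory CategoryTheory.Limits

/-- With `A`, `B`, `C` abelian, `F : A ⥤ C` right exact and `G : B ⥤ C` left exact
(so that `Comma F G` is abelian), if a morphism `(f, g)` of `Comma F G` is a
monomorphism, then `f` is a monomorphism in `A` and `g` is a monomorphism in `B`. -/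
theorem comma_mono_components {A B C : Type*} [Category A] [Category B] [Category C]
    [Abelian A] [Abelian B] [Abelian C]
    (F : A ⥤ C) [PreservesFiniteColimits F] (G : B ⥤ C) [PreservesFiniteLimits G]
    {X Y : Comma F G} (φ : X ⟶ Y) (hφ : Mono φ) :
    Mono φ.left ∧ Mono φ.right := by
  -- the kernel comparison morphism for `G` is an isomorphism
  have hker : (F.map (kernel.ι φ.left) ≫ X.hom) ≫ G.map φ.right = 0 := by
    rw [Category.assoc, ← φ.w, ← Category.assoc, ← F.map_comp,
      kernel.condition, F.map_zero, zero_comp]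
  -- the test object
  let W : Comma F G :=
    { left := kernel φ.left
      right := kernel φ.right
      hom := kernel.lift (G.map φ.right) (F.map (kernel.ι φ.left) ≫ X.hom) hker ≫
        inv (kernelComparison φ.right G) }
  -- first test morphism
  let ψ : W ⟶ X :=
    { left := kernel.ι φ.left
      right := kernel.ι φ.right
      w := by
        show F.map (kernel.ι φ.left) ≫ X.hom = _ ≫ G.map (kernel.ι φ.right)
        rw [← kernelComparison_comp_ι φ.right G, Category.assoc,
          IsIso.inv_hom_id_assoc, kernel.lift_ι] }
  -- second test morphism
  let ψ' : W ⟶ X :=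
    { left := 0
      right := 0
      w := by simp }
  have hcomp : ψ ≫ φ = ψ' ≫ φ := by
    apply CommaMorphism.ext
    · simp [ψ, ψ', kernel.condition]
    · simp [ψ, ψ', kernel.condition]
  have : ψ = ψ' := (cancel_mono φ).mp hcomp
  have hl : kernel.ι φ.left = 0 := congrArg CommaMorphism.left this
  have hr : kernel.ι φ.right = 0 := congrArg CommaMorphism.right this
  exact ⟨Abelian.mono_of_kernel_ι_eq_zero _ hl, Abelian.mono_of_kernel_ι_eq_zero _ hr⟩
end

section
/- Let Comma F G be abelian as in the main theorem. If a morphism (f,g) in Comma F G is an epimorphism, then f is an epimorphism in A and g is an epimorphism in B. -/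
open CategoryTheory CategoryTheory.Limits

/-- With `A`, `B`, `C` abelian, `F : A ⥤ C` right exact and `G : B ⥤ C` left exact
(so that `Comma F G` is abelian), if a morphism `(f, g)` of `Comma F G` is an
epimorphism, then `f` is an epimorphism in `A` and `g` is an epimorphism in `B`. -/
theorem comma_epi_components {A B C : Type*} [Category A] [Category B] [Category C]
    [Abelian A] [Abelian B] [Abelian C]
    (F : A ⥤ C) [PreservesFiniteColimits F] (G : B ⥤ C) [PreservesFiniteLimits G]
    {X Y : Comma F G} (φ : X ⟶ Y) (hφ : Epi φ) :
    Epi φ.left ∧ Epi φ.right := by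
  -- `F` and `G` are additive
  have hFB := CategoryTheory.Limits.preservesBinaryBiproducts_of_preservesBinaryCoproducts F
  have hFadd : F.Additive := Functor.additive_of_preservesBinaryBiproducts F
  have hGadd : G.Additive := Functor.additive_of_preserves_binary_products G
  -- the componentwise cokernel object
  have hzero : F.map φ.left ≫ Y.hom ≫ G.map (cokernel.π φ.right) = 0 := by
    rw [← Category.assoc, φ.w, Category.assoc, ← G.map_comp, cokernel.condition, G.map_zero,
      comp_zero]
  let c : Comma F G :=
    { left := cokernel φ.left
      right := cokernel φ.right
      hom := (PreservesCokernel.iso F φ.left).hom ≫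
        cokernel.desc (F.map φ.left) (Y.hom ≫ G.map (cokernel.π φ.right)) hzero }
  -- the projection morphism `Y ⟶ c`
  let π : Y ⟶ c :=
    { left := cokernel.π φ.left
      right := cokernel.π φ.right
      w := by
        have h1 : F.map (cokernel.π φ.left) ≫ (PreservesCokernel.iso F φ.left).hom =
            cokernel.π (F.map φ.left) := by
          rw [← Iso.eq_comp_inv, PreservesCokernel.iso_inv, π_comp_cokernelComparison]
        dsimp only [c]
        rw [← Category.assoc, h1, cokernel.π_desc]
    }
  -- the zero morphism `Y ⟶ c`
  let π' : Y ⟶ c :=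
    { left := 0
      right := 0
      w := by simp }
  have h : π = π' := by
    rw [← cancel_epi φ]
    apply CommaMorphism.ext
    · show φ.left ≫ cokernel.π φ.left = φ.left ≫ 0
      simp
    · show φ.right ≫ cokernel.π φ.right = φ.right ≫ 0
      simp
  constructor
  · exact Abelian.epi_of_cokernel_π_eq_zero _ congr(($h).left)
  · exact Abelian.epi_of_cokernel_π_eq_zero _ congr(($h).right)
end

section
/- Let Comma F G be abelian as in the main theorem. If 0 → (A',B',α') →(f,g) (A,B,α) →(h,k) (A'',B'',α'') → 0 is a short exact sequence in Comma F G, then 0 → A' → A → A'' → 0 is a short exact sequence in A and 0 → B' → B → B'' → 0 is a short exact sequence in B. -/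
open CategoryTheory CategoryTheory.Limits

section Aux

universe w' w v₁ v₂ v₃ u₁ u₂ u₃

variable {J : Type w} [Category.{w'} J]
variable {A : Type u₁} [Category.{v₁} A]
variable {B : Type u₂} [Category.{v₂} B]
variable {T : Type u₃} [Category.{v₃} T]
variable (L : A ⥤ T) (R : B ⥤ T)

lemma comma_fst_preservesLimitsOfShape [HasLimitsOfShape J A] [HasLimitsOfShape J B]
    [PreservesLimitsOfShape J R] : PreservesLimitsOfShape J (Comma.fst L R) where
  preservesLimit {K} := by
    have t₁ := limit.isLimit (K ⋙ Comma.fst L R)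
    have t₂ := limit.isLimit (K ⋙ Comma.snd L R)
    exact preservesLimit_of_preserves_limit_cone (Comma.coneOfPreservesIsLimit K t₁ t₂)
      (IsLimit.ofIsoLimit t₁ (Cones.ext (Iso.refl _) (fun j => (Category.id_comp _).symm)))

lemma comma_snd_preservesLimitsOfShape [HasLimitsOfShape J A] [HasLimitsOfShape J B]
    [PreservesLimitsOfShape J R] : PreservesLimitsOfShape J (Comma.snd L R) where
  preservesLimit {K} := by
    have t₁ := limit.isLimit (K ⋙ Comma.fst L R)
    have t₂ := limit.isLimit (K ⋙ Comma.snd L R)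
    exact preservesLimit_of_preserves_limit_cone (Comma.coneOfPreservesIsLimit K t₁ t₂)
      (IsLimit.ofIsoLimit t₂ (Cones.ext (Iso.refl _) (fun j => (Category.id_comp _).symm)))

lemma comma_fst_preservesColimitsOfShape [HasColimitsOfShape J A] [HasColimitsOfShape J B]
    [PreservesColimitsOfShape J L] : PreservesColimitsOfShape J (Comma.fst L R) where
  preservesColimit {K} := by
    have t₁ := colimit.isColimit (K ⋙ Comma.fst L R)
    have t₂ := colimit.isColimit (K ⋙ Comma.snd L R)
    exact preservesColimit_of_preserves_colimit_cocone (Comma.coconeOfPreservesIsColimit K t₁ t₂)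
      (IsColimit.ofIsoColimit t₁ (Cocones.ext (Iso.refl _) (fun j => Category.comp_id _)))

lemma comma_snd_preservesColimitsOfShape [HasColimitsOfShape J A] [HasColimitsOfShape J B]
    [PreservesColimitsOfShape J L] : PreservesColimitsOfShape J (Comma.snd L R) where
  preservesColimit {K} := by
    have t₁ := colimit.isColimit (K ⋙ Comma.fst L R)
    have t₂ := colimit.isColimit (K ⋙ Comma.snd L R)
    exact preservesColimit_of_preserves_colimit_cocone (Comma.coconeOfPreservesIsColimit K t₁ t₂)
      (IsColimit.ofIsoColimit t₂ (Cocones.ext (Iso.refl _) (fun j => Category.comp_id _)))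

end Aux

/-- With `A`, `B`, `C` abelian, `F : A ⥤ C` right exact, `G : B ⥤ C` left exact and
`Comma F G` abelian (as in the main theorem), every short exact sequence
`0 → (A',B',α') → (A,B,α) → (A'',B'',α'') → 0` in `Comma F G` induces, by taking
first components, a short exact sequence `0 → A' → A → A'' → 0` in `A`, and, by
taking second components, a short exact sequence `0 → B' → B → B'' → 0` in `B`. -/
theorem comma_shortExact_components {A B C : Type*} [Category A] [Category B] [Category C]
    [Abelian A] [Abelian B] [Abelian C]
    (F : A ⥤ C) [PreservesFiniteColimits F] (G : B ⥤ C) [PreservesFiniteLimits G]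
    [Abelian (Comma F G)]
    [(Comma.fst F G).PreservesZeroMorphisms] [(Comma.snd F G).PreservesZeroMorphisms]
    (S : ShortComplex (Comma F G)) (hS : S.ShortExact) :
    (S.map (Comma.fst F G)).ShortExact ∧ (S.map (Comma.snd F G)).ShortExact := by
  have h1 : PreservesFiniteLimits (Comma.fst F G) :=
    ⟨fun J _ _ => comma_fst_preservesLimitsOfShape F G⟩
  have h2 : PreservesFiniteLimits (Comma.snd F G) :=
    ⟨fun J _ _ => comma_snd_preservesLimitsOfShape F G⟩
  have h3 : PreservesFiniteColimits (Comma.fst F G) :=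
    ⟨fun J _ _ => comma_fst_preservesColimitsOfShape F G⟩
  have h4 : PreservesFiniteColimits (Comma.snd F G) :=
    ⟨fun J _ _ => comma_snd_preservesColimitsOfShape F G⟩
  exact ⟨hS.map_of_exact _, hS.map_of_exact _⟩
end

section
/- Let Comma F G be abelian as in the main theorem. For every object (A,B,α), the sequence 0 → (0, B, 0) → (A, B, α) → (A, 0, 0) → 0, with maps (0, id_B) and (id_A, 0), is a short exact sequence in Comma F G. Consequently [(A,B,α)] = [(A,B,0)] in the Grothendieck group K(Comma F G). -/
open CategoryTheory CategoryTheory.Limits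

/-- The subgroup of relations defining the Grothendieck group of an abelian category:
generated by `[X₂] - [X₁] - [X₃]` for each short exact sequence `0 → X₁ → X₂ → X₃ → 0`. -/
def grothendieckRelations (D : Type*) [Category D] [Abelian D] :
    AddSubgroup (FreeAbelianGroup D) :=
  AddSubgroup.closure {x | ∃ S : ShortComplex D, S.ShortExact ∧
    x = FreeAbelianGroup.of S.X₂ - FreeAbelianGroup.of S.X₁ - FreeAbelianGroup.of S.X₃}

/-- The Grothendieck group `K(D)` of an abelian category `D`. -/
def K0 (D : Type*) [Category D] [Abelian D] : Type _ :=
  FreeAbelianGroup D ⧸ grothendieckRelations D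

noncomputable instance (D : Type*) [Category D] [Abelian D] : AddCommGroup (K0 D) :=
  inferInstanceAs (AddCommGroup (FreeAbelianGroup D ⧸ grothendieckRelations D))

/-- The class `[X]` of an object `X` in the Grothendieck group. -/
def K0.mk {D : Type*} [Category D] [Abelian D] (X : D) : K0 D :=
  QuotientAddGroup.mk (FreeAbelianGroup.of X)

open ZeroObject

section
variable {A B C : Type*} [Category A] [Category B] [Category C]
  [Abelian A] [Abelian B] [Abelian C]
  (F : A ⥤ C) [PreservesFiniteColimits F] (G : B ⥤ C) [PreservesFiniteLimits G]

/-- `F.obj 0` is a zero object when `F` preserves finite colimits. -/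
lemma isZero_F_obj_zero : IsZero (F.obj (0 : A)) :=
  (isZero_zero C).of_iso
    ((HasZeroObject.zeroIsInitial.isInitialObj F 0).uniqueUpToIso HasZeroObject.zeroIsInitial)

/-- `G.obj 0` is a zero object when `G` preserves finite limits. -/
lemma isZero_G_obj_zero : IsZero (G.obj (0 : B)) :=
  (isZero_zero C).of_iso
    ((HasZeroObject.zeroIsTerminal.isTerminalObj G 0).uniqueUpToIso HasZeroObject.zeroIsTerminal)

/-- The object `(0, B, 0)` of the comma category. -/
noncomputable def leftZeroObj (X : Comma F G) : Comma F G :=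
  { left := 0, right := X.right, hom := 0 }

/-- The object `(A, 0, 0)` of the comma category. -/
noncomputable def rightZeroObj (X : Comma F G) : Comma F G :=
  { left := X.left, right := 0, hom := 0 }

/-- The morphism `(0, id_B) : (0, B, 0) ⟶ (A, B, α)`. -/
noncomputable def inclMor (X : Comma F G) : leftZeroObj F G X ⟶ X :=
  { left := 0
    right := 𝟙 X.right
    w := (isZero_F_obj_zero F).eq_of_src _ _ }

/-- The morphism `(id_A, 0) : (A, B, α) ⟶ (A, 0, 0)`. -/
noncomputable def projMor (X : Comma F G) : X ⟶ rightZeroObj F G X :=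
  { left := 𝟙 X.left
    right := 0
    w := (isZero_G_obj_zero G).eq_of_tgt _ _ }

/-- The object `(0, 0, 0)` of the comma category. -/
noncomputable def zeroComma : Comma F G := { left := 0, right := 0, hom := 0 }

lemma isZero_zeroComma : IsZero (zeroComma F G) := by
  constructor
  · intro Y
    refine ⟨⟨⟨{ left := 0, right := 0, w := (isZero_F_obj_zero F).eq_of_src _ _ }⟩, ?_⟩⟩
    intro f
    apply CommaMorphism.ext
    · exact (isZero_zero A).eq_of_src _ _
    · exact (isZero_zero B).eq_of_src _ _
  · intro Y
    refine ⟨⟨⟨{ left := 0, right := 0, w := (isZero_G_obj_zero G).eq_of_tgt _ _ }⟩, ?_⟩⟩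
    intro f
    apply CommaMorphism.ext
    · exact (isZero_zero A).eq_of_tgt _ _
    · exact (isZero_zero B).eq_of_tgt _ _

lemma comma_zero_left [Abelian (Comma F G)] (P Q : Comma F G) : (0 : P ⟶ Q).left = 0 := by
  let t : P ⟶ zeroComma F G :=
    { left := 0, right := 0, w := (isZero_G_obj_zero G).eq_of_tgt _ _ }
  let s : zeroComma F G ⟶ Q :=
    { left := 0, right := 0, w := (isZero_F_obj_zero F).eq_of_src _ _ }
  have h : t ≫ s = 0 := by
    rw [(isZero_zeroComma F G).eq_of_tgt t 0, zero_comp]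
  rw [← h]
  simp [t, s]

lemma comma_zero_right [Abelian (Comma F G)] (P Q : Comma F G) : (0 : P ⟶ Q).right = 0 := by
  let t : P ⟶ zeroComma F G :=
    { left := 0, right := 0, w := (isZero_G_obj_zero G).eq_of_tgt _ _ }
  let s : zeroComma F G ⟶ Q :=
    { left := 0, right := 0, w := (isZero_F_obj_zero F).eq_of_src _ _ }
  have h : t ≫ s = 0 := by
    rw [(isZero_zeroComma F G).eq_of_tgt t 0, zero_comp]
  rw [← h]
  simp [t, s]

lemma comma_mono_of_components [Abelian (Comma F G)] {P Q : Comma F G} (f : P ⟶ Q)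
    (hl : Mono f.left) (hr : Mono f.right) : Mono f := by
  constructor
  intro Z u v h
  apply CommaMorphism.ext
  · exact (cancel_mono f.left).1 (by simpa using congrArg CommaMorphism.left h)
  · exact (cancel_mono f.right).1 (by simpa using congrArg CommaMorphism.right h)

lemma comma_epi_of_components [Abelian (Comma F G)] {P Q : Comma F G} (f : P ⟶ Q)
    (hl : Epi f.left) (hr : Epi f.right) : Epi f := by
  constructor
  intro Z u v h
  apply CommaMorphism.ext
  · exact (cancel_epi f.left).1 (by simpa using congrArg CommaMorphism.left h)
  · exact (cancel_epi f.right).1 (by simpa using congrArg CommaMorphism.right h)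

lemma comma_ses [Abelian (Comma F G)] (X : Comma F G) :
    ∃ h0 : inclMor F G X ≫ projMor F G X = 0,
      (ShortComplex.mk (inclMor F G X) (projMor F G X) h0).ShortExact := by
  have h0 : inclMor F G X ≫ projMor F G X = 0 := by
    apply CommaMorphism.ext
    · rw [comma_zero_left]
      exact (isZero_zero A).eq_of_src _ _
    · rw [comma_zero_right]
      exact (isZero_zero B).eq_of_tgt _ _
  refine ⟨h0, { exact := ?_, mono_f := ?_, epi_g := ?_ }⟩
  · -- exactness
    apply ShortComplex.exact_of_f_is_kernel
    refine KernelFork.IsLimit.ofι _ _ (fun {W'} k hk => ?_) (fun {W'} k hk => ?_)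
      (fun {W'} k hk m hm => ?_)
    · refine { left := 0, right := k.right, w := ?_ }
      have : F.map k.left ≫ X.hom = W'.hom ≫ G.map k.right := k.w
      have hkl : k.left = 0 := by
        have := congrArg CommaMorphism.left hk
        simp only [Comma.comp_left] at this
        rw [comma_zero_left] at this
        simp [projMor] at this
        exact (Category.comp_id _).symm.trans this
      rw [hkl] at this
      simp only [Functor.map_zero, zero_comp] at this
      simp [leftZeroObj, ← this]
    · apply CommaMorphism.ext
      · simp only [Comma.comp_left, inclMor]
        have := congrArg CommaMorphism.left hk
        simp only [Comma.comp_left] at this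
        rw [comma_zero_left] at this
        simp only [projMor, Category.comp_id] at this
        simp [(Category.comp_id _).symm.trans this]
        rfl
      · simp only [Comma.comp_right, inclMor]
        exact Category.comp_id _
    · apply CommaMorphism.ext
      · exact (isZero_zero A).eq_of_tgt _ _
      · have := congrArg CommaMorphism.right hm
        simp only [Comma.comp_right, inclMor] at this
        rw [show m.right ≫ 𝟙 X.right = m.right from Category.comp_id _] at this
        exact this
  · -- mono
    apply comma_mono_of_components
    · constructor
      intro Z u v _
      exact (isZero_zero A).eq_of_tgt _ _
    · exact inferInstanceAs (Mono (𝟙 X.right))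
  · -- epi
    apply comma_epi_of_components
    · exact inferInstanceAs (Epi (𝟙 X.left))
    · constructor
      intro Z u v _
      exact (isZero_zero B).eq_of_src _ _

lemma K0.mk_eq_of_shortExact {D : Type*} [Category D] [Abelian D]
    (S : ShortComplex D) (hS : S.ShortExact) :
    K0.mk S.X₂ = K0.mk S.X₁ + K0.mk S.X₃ := by
  have hmem : FreeAbelianGroup.of S.X₂ - FreeAbelianGroup.of S.X₁ - FreeAbelianGroup.of S.X₃
      ∈ grothendieckRelations D :=
    AddSubgroup.subset_closure ⟨S, hS, rfl⟩
  have h2 : ((QuotientAddGroup.mk' (grothendieckRelations D))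
      (FreeAbelianGroup.of S.X₂ - FreeAbelianGroup.of S.X₁ - FreeAbelianGroup.of S.X₃)) = 0 :=
    (QuotientAddGroup.eq_zero_iff _).2 hmem
  rw [map_sub, map_sub, sub_sub, sub_eq_zero] at h2
  exact h2

/-- For every object `(A, B, α)` of the abelian comma category `Comma F G`, the
sequence `0 → (0, B, 0) → (A, B, α) → (A, 0, 0) → 0`, with maps `(0, id_B)` and
`(id_A, 0)`, is a short exact sequence; consequently `[(A,B,α)] = [(A,B,0)]` in the
Grothendieck group `K(Comma F G)`. -/
theorem comma_shortExact_and_K0_eq [Abelian (Comma F G)] :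
    ∀ X : Comma F G,
      ∃ h0 : inclMor F G X ≫ projMor F G X = 0,
        (ShortComplex.mk (inclMor F G X) (projMor F G X) h0).ShortExact ∧
        K0.mk X = K0.mk ({ left := X.left, right := X.right, hom := 0 } : Comma F G) := by
  intro X
  obtain ⟨h0, hse⟩ := comma_ses F G X
  refine ⟨h0, hse, ?_⟩
  obtain ⟨h0', hse'⟩ :=
    comma_ses F G ({ left := X.left, right := X.right, hom := 0 } : Comma F G)
  rw [K0.mk_eq_of_shortExact _ hse, K0.mk_eq_of_shortExact _ hse']
  rfl

end
end

section
/- Let A, B, C be abelian categories, F : A ⥤ C right exact, G : B ⥤ C left exact. Then the Grothendieck group of the comma category satisfies K(Comma F G) ≅ K(A) ⊕ K(B), via [(A,B,α)] ↦ ([A], [B]). -/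
open CategoryTheory CategoryTheory.Limits

set_option linter.unusedSectionVars false
set_option maxHeartbeats 1000000

namespace CommaK0Aux

open ZeroObject

section General

variable {D : Type*} [Category D] [Abelian D]

/-- The canonical projection as an `AddMonoidHom`. -/
noncomputable def K0mkHom (D : Type*) [Category D] [Abelian D] :
    FreeAbelianGroup D →+ K0 D :=
  QuotientAddGroup.mk' (grothendieckRelations D)

lemma K0mkHom_of (X : D) : K0mkHom D (FreeAbelianGroup.of X) = K0.mk X := rfl

lemma mk_rel {S : ShortComplex D} (hS : S.ShortExact) :
    K0.mk S.X₂ = K0.mk S.X₁ + K0.mk S.X₃ := by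
  have h : K0mkHom D (FreeAbelianGroup.of S.X₂ - FreeAbelianGroup.of S.X₁ -
      FreeAbelianGroup.of S.X₃) = 0 :=
    (QuotientAddGroup.eq_zero_iff _).2 (AddSubgroup.subset_closure ⟨S, hS, rfl⟩)
  rw [map_sub, map_sub, sub_sub, sub_eq_zero] at h
  exact h

lemma mk_isZero {X : D} (hX : IsZero X) : K0.mk X = 0 := by
  have hS : (ShortComplex.mk (0 : X ⟶ X) (0 : X ⟶ X) (by simp)).ShortExact :=
    { exact := ShortComplex.exact_of_isZero_X₂ _ hX
      mono_f := ⟨fun u v _ => hX.eq_of_tgt u v⟩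
      epi_g := ⟨fun u v _ => hX.eq_of_src u v⟩ }
  have h := mk_rel hS
  exact left_eq_add.mp h

end General

section Main

variable {A B C : Type*} [Category A] [Category B] [Category C]
  [Abelian A] [Abelian B] [Abelian C]
  (F : A ⥤ C) [PreservesFiniteColimits F] (G : B ⥤ C) [PreservesFiniteLimits G]

instance fstPFL : PreservesFiniteLimits (Comma.fst F G) where
  preservesFiniteLimits J _ _ :=
    { preservesLimit := fun {K} =>
        preservesLimit_of_preserves_limit_cone
          (Comma.coneOfPreservesIsLimit K (limit.isLimit (K ⋙ Comma.fst F G))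
            (limit.isLimit (K ⋙ Comma.snd F G)))
          (IsLimit.ofIsoLimit (limit.isLimit (K ⋙ Comma.fst F G))
            (Cones.ext (Iso.refl _) (fun _ => (Category.id_comp _).symm))) }

instance sndPFL : PreservesFiniteLimits (Comma.snd F G) where
  preservesFiniteLimits J _ _ :=
    { preservesLimit := fun {K} =>
        preservesLimit_of_preserves_limit_cone
          (Comma.coneOfPreservesIsLimit K (limit.isLimit (K ⋙ Comma.fst F G))
            (limit.isLimit (K ⋙ Comma.snd F G)))
          (IsLimit.ofIsoLimit (limit.isLimit (K ⋙ Comma.snd F G))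
            (Cones.ext (Iso.refl _) (fun _ => (Category.id_comp _).symm))) }

instance fstPFC : PreservesFiniteColimits (Comma.fst F G) where
  preservesFiniteColimits J _ _ :=
    { preservesColimit := fun {K} =>
        preservesColimit_of_preserves_colimit_cocone
          (Comma.coconeOfPreservesIsColimit K (colimit.isColimit (K ⋙ Comma.fst F G))
            (colimit.isColimit (K ⋙ Comma.snd F G)))
          (IsColimit.ofIsoColimit (colimit.isColimit (K ⋙ Comma.fst F G))
            (Cocones.ext (Iso.refl _) (fun _ => Category.comp_id _))) }

instance sndPFC : PreservesFiniteColimits (Comma.snd F G) where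
  preservesFiniteColimits J _ _ :=
    { preservesColimit := fun {K} =>
        preservesColimit_of_preserves_colimit_cocone
          (Comma.coconeOfPreservesIsColimit K (colimit.isColimit (K ⋙ Comma.fst F G))
            (colimit.isColimit (K ⋙ Comma.snd F G)))
          (IsColimit.ofIsoColimit (colimit.isColimit (K ⋙ Comma.snd F G))
            (Cocones.ext (Iso.refl _) (fun _ => Category.comp_id _))) }

variable [Abelian (Comma F G)]

@[simp]
lemma zero_left (W Y : Comma F G) : (0 : W ⟶ Y).left = 0 :=
  (Comma.fst F G).map_zero W Y

@[simp]
lemma zero_right (W Y : Comma F G) : (0 : W ⟶ Y).right = 0 :=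
  (Comma.snd F G).map_zero W Y

/-- The object `(X, 0, 0)` of the comma category. -/
@[simps]
noncomputable def objL (X : A) : Comma F G where
  left := X
  right := 0
  hom := 0

/-- The object `(0, Y, 0)` of the comma category. -/
@[simps]
noncomputable def objR (Y : B) : Comma F G where
  left := 0
  right := Y
  hom := 0

attribute [reducible] objL objR

@[simps]
noncomputable def homL {X Y : A} (f : X ⟶ Y) : objL F G X ⟶ objL F G Y where
  left := f
  right := 0
  w := (G.map_isZero (isZero_zero B)).eq_of_tgt _ _

@[simps]
noncomputable def homR {X Y : B} (f : X ⟶ Y) : objR F G X ⟶ objR F G Y where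
  left := 0
  right := f
  w := (F.map_isZero (isZero_zero A)).eq_of_src _ _

@[simps]
noncomputable def splitF (X : Comma F G) : objR F G X.right ⟶ X where
  left := 0
  right := 𝟙 X.right
  w := (F.map_isZero (isZero_zero A)).eq_of_src _ _

@[simps]
noncomputable def splitG (X : Comma F G) : X ⟶ objL F G X.left where
  left := 𝟙 X.left
  right := 0
  w := (G.map_isZero (isZero_zero B)).eq_of_tgt _ _

/-- The short complex `(0, X.right) → X → (X.left, 0)` in the comma category. -/
noncomputable def splitSC (X : Comma F G) : ShortComplex (Comma F G) :=
  ShortComplex.mk (splitF F G X) (splitG F G X)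
    (by
      apply Comma.hom_ext
      · simp
      · exact (isZero_zero B).eq_of_tgt _ _)

attribute [reducible] splitSC

lemma splitSC_shortExact (X : Comma F G) : (splitSC F G X).ShortExact where
  exact := ShortComplex.exact_of_g_is_cokernel _ <|
    CokernelCofork.IsColimit.ofπ _ _
      (fun {W} e he =>
        { left := e.left
          right := 0
          w := by
            have h1 : e.right = 0 := by
              simpa [splitSC] using congrArg CommaMorphism.right he
            have h2 := e.w
            rw [h1, G.map_zero, comp_zero] at h2
            simpa using h2 })
      (fun {W} e he => by
        have h1 : e.right = 0 := by simpa [splitSC] using congrArg CommaMorphism.right he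
        apply Comma.hom_ext
        · simp [splitSC]
        · simp [splitSC, h1])
      (fun {W} e he m hm => by
        apply Comma.hom_ext
        · exact (by simpa [splitSC] using congrArg CommaMorphism.left hm : m.left = e.left)
        · exact (isZero_zero B).eq_of_src _ _)
  mono_f := ⟨fun u v h => by
    apply Comma.hom_ext
    · exact (isZero_zero A).eq_of_tgt _ _
    · simpa [splitSC] using congrArg CommaMorphism.right h⟩
  epi_g := ⟨fun u v h => by
    apply Comma.hom_ext
    · simpa [splitSC] using congrArg CommaMorphism.left h
    · exact (isZero_zero B).eq_of_src _ _⟩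

/-- The image in the comma category of a short complex in `A`. -/
noncomputable def mapSCA (S : ShortComplex A) : ShortComplex (Comma F G) :=
  ShortComplex.mk (homL F G S.f) (homL F G S.g)
    (by
      apply Comma.hom_ext
      · simp [S.zero]
      · exact (isZero_zero B).eq_of_tgt _ _)

attribute [reducible] mapSCA

lemma mapSCA_shortExact {S : ShortComplex A} (hS : S.ShortExact) :
    (mapSCA F G S).ShortExact := by
  have := hS.mono_f
  have := hS.epi_g
  have hepi : Epi (F.map S.g) := preserves_epi_of_preservesColimit F S.g
  exact
    { exact := ShortComplex.exact_of_g_is_cokernel _ <|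
        CokernelCofork.IsColimit.ofπ _ _
          (fun {W} e he =>
            { left := hS.exact.desc e.left
                (by simpa [mapSCA] using congrArg CommaMorphism.left he)
              right := 0
              w := by
                have h2 : F.map e.left ≫ W.hom = 0 := by
                  have h := e.w
                  rw [show (mapSCA F G S).X₂.hom = 0 from rfl, zero_comp] at h
                  exact h
                rw [show (mapSCA F G S).X₃.hom = 0 from rfl, zero_comp,
                  ← cancel_epi (F.map S.g), comp_zero, ← Functor.map_comp_assoc,
                  hS.exact.g_desc, h2] })
          (fun {W} e he => by
            apply Comma.hom_ext
            · simpa [mapSCA] using hS.exact.g_desc e.left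
                (by simpa [mapSCA] using congrArg CommaMorphism.left he)
            · exact (isZero_zero B).eq_of_src _ _)
          (fun {W} e he m hm => by
            apply Comma.hom_ext
            · refine Cofork.IsColimit.hom_ext hS.exact.gIsCokernel ?_
              have h3 : S.g ≫ m.left = e.left := by
                simpa [mapSCA] using congrArg CommaMorphism.left hm
              simp only [Cofork.π_ofπ, h3]
              exact (hS.exact.g_desc e.left _).symm
            · exact (isZero_zero B).eq_of_src _ _)
      mono_f := ⟨fun u v h => by
        apply Comma.hom_ext
        · exact cancel_mono S.f |>.1 (by simpa [mapSCA] using congrArg CommaMorphism.left h)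
        · exact (isZero_zero B).eq_of_tgt _ _⟩
      epi_g := ⟨fun u v h => by
        apply Comma.hom_ext
        · exact cancel_epi S.g |>.1 (by simpa [mapSCA] using congrArg CommaMorphism.left h)
        · exact (isZero_zero B).eq_of_src _ _⟩ }

/-- The image in the comma category of a short complex in `B`. -/
noncomputable def mapSCB (S : ShortComplex B) : ShortComplex (Comma F G) :=
  ShortComplex.mk (homR F G S.f) (homR F G S.g)
    (by
      apply Comma.hom_ext
      · exact (isZero_zero A).eq_of_src _ _
      · simp [S.zero])

attribute [reducible] mapSCB

lemma mapSCB_shortExact {S : ShortComplex B} (hS : S.ShortExact) :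
    (mapSCB F G S).ShortExact := by
  have := hS.mono_f
  have := hS.epi_g
  exact
    { exact := ShortComplex.exact_of_g_is_cokernel _ <|
        CokernelCofork.IsColimit.ofπ _ _
          (fun {W} e he =>
            { left := 0
              right := hS.exact.desc e.right
                (by simpa [mapSCB] using congrArg CommaMorphism.right he)
              w := (F.map_isZero (isZero_zero A)).eq_of_src _ _ })
          (fun {W} e he => by
            apply Comma.hom_ext
            · exact (isZero_zero A).eq_of_src _ _
            · simpa [mapSCB] using hS.exact.g_desc e.right
                (by simpa [mapSCB] using congrArg CommaMorphism.right he))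
          (fun {W} e he m hm => by
            apply Comma.hom_ext
            · exact (isZero_zero A).eq_of_src _ _
            · refine Cofork.IsColimit.hom_ext hS.exact.gIsCokernel ?_
              have h3 : S.g ≫ m.right = e.right := by
                simpa [mapSCB] using congrArg CommaMorphism.right hm
              simp only [Cofork.π_ofπ, h3]
              exact (hS.exact.g_desc e.right _).symm)
      mono_f := ⟨fun u v h => by
        apply Comma.hom_ext
        · exact (isZero_zero A).eq_of_tgt _ _
        · exact cancel_mono S.f |>.1 (by simpa [mapSCB] using congrArg CommaMorphism.right h)⟩
      epi_g := ⟨fun u v h => by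
        apply Comma.hom_ext
        · exact (isZero_zero A).eq_of_src _ _
        · exact cancel_epi S.g |>.1 (by simpa [mapSCB] using congrArg CommaMorphism.right h)⟩ }

/-- The forward map `K(Comma F G) → K(A) × K(B)`. -/
noncomputable def phi : K0 (Comma F G) →+ K0 A × K0 B :=
  QuotientAddGroup.lift _
    (FreeAbelianGroup.lift fun X : Comma F G => ((K0.mk X.left, K0.mk X.right) : K0 A × K0 B))
    (by
      apply (AddSubgroup.closure_le _).2
      rintro x ⟨S, hS, rfl⟩
      simp only [SetLike.mem_coe, AddMonoidHom.mem_ker, map_sub, FreeAbelianGroup.lift_apply_of]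
      have hA := mk_rel (hS.map_of_exact (Comma.fst F G))
      have hB := mk_rel (hS.map_of_exact (Comma.snd F G))
      ext
      · simpa [sub_sub, sub_eq_zero] using hA
      · simpa [sub_sub, sub_eq_zero] using hB)

lemma phi_mk (X : Comma F G) : phi F G (K0.mk X) = (K0.mk X.left, K0.mk X.right) :=
  (QuotientAddGroup.lift_mk _ _ _).trans (FreeAbelianGroup.lift_apply_of _ _)

/-- The map `K(A) → K(Comma F G)`, `[X] ↦ [(X,0,0)]`. -/
noncomputable def psiA : K0 A →+ K0 (Comma F G) :=
  QuotientAddGroup.lift _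
    ((K0mkHom (Comma F G)).comp
      (FreeAbelianGroup.lift fun X : A => FreeAbelianGroup.of (objL F G X)))
    (by
      apply (AddSubgroup.closure_le _).2
      rintro x ⟨S, hS, rfl⟩
      simp only [SetLike.mem_coe, AddMonoidHom.mem_ker, map_sub, AddMonoidHom.coe_comp,
        Function.comp_apply, FreeAbelianGroup.lift_apply_of, K0mkHom_of]
      have h := mk_rel (mapSCA_shortExact F G hS)
      simpa [sub_sub, sub_eq_zero] using h)

/-- The map `K(B) → K(Comma F G)`, `[Y] ↦ [(0,Y,0)]`. -/
noncomputable def psiB : K0 B →+ K0 (Comma F G) :=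
  QuotientAddGroup.lift _
    ((K0mkHom (Comma F G)).comp
      (FreeAbelianGroup.lift fun Y : B => FreeAbelianGroup.of (objR F G Y)))
    (by
      apply (AddSubgroup.closure_le _).2
      rintro x ⟨S, hS, rfl⟩
      simp only [SetLike.mem_coe, AddMonoidHom.mem_ker, map_sub, AddMonoidHom.coe_comp,
        Function.comp_apply, FreeAbelianGroup.lift_apply_of, K0mkHom_of]
      have h := mk_rel (mapSCB_shortExact F G hS)
      simpa [sub_sub, sub_eq_zero] using h)

lemma psiA_mk (X : A) : psiA F G (K0.mk X) = K0.mk (objL F G X) :=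
  (QuotientAddGroup.lift_mk _ _ _).trans
    (by rw [AddMonoidHom.comp_apply, FreeAbelianGroup.lift_apply_of, K0mkHom_of])

lemma psiB_mk (Y : B) : psiB F G (K0.mk Y) = K0.mk (objR F G Y) :=
  (QuotientAddGroup.lift_mk _ _ _).trans
    (by rw [AddMonoidHom.comp_apply, FreeAbelianGroup.lift_apply_of, K0mkHom_of])

/-- The inverse map `K(A) × K(B) → K(Comma F G)`. -/
noncomputable def psi : K0 A × K0 B →+ K0 (Comma F G) :=
  (psiA F G).coprod (psiB F G)

lemma psi_phi_mk (X : Comma F G) : psi F G (phi F G (K0.mk X)) = K0.mk X := by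
  rw [phi_mk]
  have : psi F G (K0.mk X.left, K0.mk X.right)
      = K0.mk (objL F G X.left) + K0.mk (objR F G X.right) := by
    simp [psi, AddMonoidHom.coprod_apply, psiA_mk, psiB_mk]
  rw [this]
  have h := mk_rel (splitSC_shortExact F G X)
  rw [show (splitSC F G X).X₂ = X from rfl] at h
  rw [h]
  exact (add_comm _ _)

end Main

end CommaK0Aux

open CommaK0Aux in
/-- Let `A`, `B`, `C` be abelian categories, `F : A ⥤ C` right exact, `G : B ⥤ C`
left exact (so `Comma F G` is abelian). Then the Grothendieck group of the comma
category satisfies `K(Comma F G) ≅ K(A) ⊕ K(B)`, via `[(A,B,α)] ↦ ([A],[B])`. -/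
theorem comma_grothendieckGroup {A B C : Type*} [Category A] [Category B] [Category C]
    [Abelian A] [Abelian B] [Abelian C]
    (F : A ⥤ C) [PreservesFiniteColimits F] (G : B ⥤ C) [PreservesFiniteLimits G]
    [Abelian (Comma F G)] :
    ∃ e : K0 (Comma F G) ≃+ K0 A × K0 B,
      ∀ X : Comma F G, e (K0.mk X) = (K0.mk X.left, K0.mk X.right) := by
  have h1 : (psi F G).comp (phi F G) = AddMonoidHom.id _ := by
    apply AddMonoidHom.ext
    intro x
    obtain ⟨z, rfl⟩ : ∃ z, K0mkHom (Comma F G) z = x := QuotientAddGroup.mk'_surjective _ x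
    simp only [AddMonoidHom.comp_apply, AddMonoidHom.id_apply]
    induction z using FreeAbelianGroup.induction_on with
    | zero => simp
    | of X => exact psi_phi_mk F G X
    | neg X ih => simpa [map_neg] using congrArg Neg.neg ih
    | add x y ihx ihy =>
        have hadd : K0mkHom (Comma F G) (x + y)
            = K0mkHom (Comma F G) x + K0mkHom (Comma F G) y := map_add _ _ _
        rw [hadd, map_add, map_add, ihx, ihy]
  have hA : ∀ a : K0 A, phi F G (psiA F G a) = (a, 0) := by
    intro a
    obtain ⟨z, rfl⟩ : ∃ z, K0mkHom (A) z = a := QuotientAddGroup.mk'_surjective _ a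
    induction z using FreeAbelianGroup.induction_on with
    | zero => simp; rfl
    | of X =>
        rw [show K0mkHom A (FreeAbelianGroup.of X) = K0.mk X from rfl,
          psiA_mk, phi_mk]
        have : K0.mk ((objL F G X).right) = 0 := mk_isZero (isZero_zero B)
        rw [show (objL F G X).left = X from rfl, this]
    | neg X ih =>
        have hneg : K0mkHom A (-FreeAbelianGroup.of X)
            = -K0mkHom A (FreeAbelianGroup.of X) := map_neg _ _
        rw [hneg, map_neg, map_neg, ih]
        simp
    | add x y ihx ihy =>
        have hadd : K0mkHom (A) (x + y)
            = K0mkHom (A) x + K0mkHom (A) y := map_add _ _ _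
        rw [hadd, map_add, map_add, ihx, ihy]
        simp
  have hB : ∀ b : K0 B, phi F G (psiB F G b) = (0, b) := by
    intro b
    obtain ⟨z, rfl⟩ : ∃ z, K0mkHom (B) z = b := QuotientAddGroup.mk'_surjective _ b
    induction z using FreeAbelianGroup.induction_on with
    | zero => simp; rfl
    | of Y =>
        rw [show K0mkHom B (FreeAbelianGroup.of Y) = K0.mk Y from rfl,
          psiB_mk, phi_mk]
        have : K0.mk ((objR F G Y).left) = 0 := mk_isZero (isZero_zero A)
        rw [show (objR F G Y).right = Y from rfl, this]
    | neg Y ih =>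
        have hneg : K0mkHom B (-FreeAbelianGroup.of Y)
            = -K0mkHom B (FreeAbelianGroup.of Y) := map_neg _ _
        rw [hneg, map_neg, map_neg, ih]
        simp
    | add x y ihx ihy =>
        have hadd : K0mkHom (B) (x + y)
            = K0mkHom (B) x + K0mkHom (B) y := map_add _ _ _
        rw [hadd, map_add, map_add, ihx, ihy]
        simp
  have h2 : (phi F G).comp (psi F G) = AddMonoidHom.id _ := by
    apply AddMonoidHom.ext
    rintro ⟨a, b⟩
    simp only [AddMonoidHom.comp_apply, AddMonoidHom.id_apply, psi,
      AddMonoidHom.coprod_apply, map_add, hA a, hB b]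
    exact Prod.ext (by simp) (by simp)
  refine ⟨AddMonoidHom.toAddEquiv (phi F G) (psi F G) h1 h2, fun X => ?_⟩
  rw [AddMonoidHom.toAddEquiv_apply]
  exact phi_mk F G X
end

section
/- Let Z_A : K(A) → ℂ and Z_B : K(B) → ℂ be stability functions on abelian categories A and B, and let x, y > 0 be real numbers. Then Z : K(Comma F G) → ℂ defined by Z([(A,B,α)]) = x·Z_A([A]) + y·Z_B([B]) is a stability function on the abelian comma category Comma F G. -/
open CategoryTheory CategoryTheory.Limits

/-- A stability function on an abelian category `D`: an additive homomorphism
`Z : K(D) → ℂ` such that every nonzero object `X` satisfies `Im Z([X]) ≥ 0`, and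
`Im Z([X]) = 0` implies `Re Z([X]) < 0`. -/
def IsStabilityFunction {D : Type*} [Category D] [Abelian D] (Z : K0 D →+ ℂ) : Prop :=
  ∀ X : D, ¬ IsZero X →
    0 ≤ (Z (K0.mk X)).im ∧ ((Z (K0.mk X)).im = 0 → (Z (K0.mk X)).re < 0)

/-- The class of a zero object vanishes in the Grothendieck group. -/
lemma K0.mk_eq_zero_of_isZero {D : Type*} [Category D] [Abelian D] {X : D}
    (hX : IsZero X) : K0.mk X = 0 := by
  have hrel : -(FreeAbelianGroup.of X) ∈ grothendieckRelations D := by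
    apply AddSubgroup.subset_closure
    refine ⟨ShortComplex.mk (0 : X ⟶ X) (0 : X ⟶ X) (by simp), ?_, by abel⟩
    have h1 : (0 : X ⟶ X) = 𝟙 X := hX.eq_of_src _ _
    haveI : Mono (0 : X ⟶ X) := h1 ▸ inferInstanceAs (Mono (𝟙 X))
    haveI : Epi (0 : X ⟶ X) := h1 ▸ inferInstanceAs (Epi (𝟙 X))
    exact ⟨ShortComplex.exact_of_isZero_X₂ _ hX⟩
  have : FreeAbelianGroup.of X ∈ grothendieckRelations D := by
    simpa using neg_mem hrel
  exact (QuotientAddGroup.eq_zero_iff _).mpr this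

/-- If both components of a comma object are zero, the comma object is zero. -/
lemma Comma.isZero_of_components {A B C : Type*} [Category A] [Category B] [Category C]
    [Abelian A] [Abelian B] [Abelian C]
    (F : A ⥤ C) [PreservesFiniteColimits F] (G : B ⥤ C) [PreservesFiniteLimits G]
    (X : Comma F G) (hl : IsZero X.left) (hr : IsZero X.right) : IsZero X := by
  have hFl : IsZero (F.obj X.left) := F.map_isZero hl
  have hGr : IsZero (G.obj X.right) := G.map_isZero hr
  constructor
  · intro Y
    refine ⟨⟨⟨⟨hl.to_ Y.left, hr.to_ Y.right, hFl.eq_of_src _ _⟩⟩, ?_⟩⟩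
    intro f
    apply CommaMorphism.ext
    · exact hl.eq_of_src _ _
    · exact hr.eq_of_src _ _
  · intro Y
    refine ⟨⟨⟨⟨hl.from_ Y.left, hr.from_ Y.right, hGr.eq_of_tgt _ _⟩⟩, ?_⟩⟩
    intro f
    apply CommaMorphism.ext
    · exact hl.eq_of_tgt _ _
    · exact hr.eq_of_tgt _ _

/-- Let `Z_A`, `Z_B` be stability functions on abelian categories `A` and `B`, and
`x, y > 0` real numbers. Then `Z : K(Comma F G) → ℂ` defined by
`Z([(A,B,α)]) = x·Z_A([A]) + y·Z_B([B])` is a stability function on the abelian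
comma category `Comma F G`. -/
theorem comma_stabilityFunction {A B C : Type*} [Category A] [Category B] [Category C]
    [Abelian A] [Abelian B] [Abelian C]
    (F : A ⥤ C) [PreservesFiniteColimits F] (G : B ⥤ C) [PreservesFiniteLimits G]
    [Abelian (Comma F G)]
    (ZA : K0 A →+ ℂ) (ZB : K0 B →+ ℂ)
    (hZA : IsStabilityFunction ZA) (hZB : IsStabilityFunction ZB)
    (x y : ℝ) (hx : 0 < x) (hy : 0 < y)
    (Z : K0 (Comma F G) →+ ℂ)
    (hZ : ∀ X : Comma F G,
      Z (K0.mk X) = (x : ℂ) * ZA (K0.mk X.left) + (y : ℂ) * ZB (K0.mk X.right)) :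
    IsStabilityFunction Z := by
  intro X hX
  rw [hZ]
  have hcomp : ¬ IsZero X.left ∨ ¬ IsZero X.right := by
    by_contra h
    push_neg at h
    exact hX (Comma.isZero_of_components F G X h.1 h.2)
  -- abbreviations
  set a := ZA (K0.mk X.left) with ha
  set b := ZB (K0.mk X.right) with hb
  have him : ((x : ℂ) * a + (y : ℂ) * b).im = x * a.im + y * b.im := by simp
  have hre : ((x : ℂ) * a + (y : ℂ) * b).re = x * a.re + y * b.re := by simp
  rw [him, hre]
  -- properties of each component
  have hA : (¬ IsZero X.left → 0 ≤ a.im ∧ (a.im = 0 → a.re < 0)) := fun h => hZA X.left h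
  have hB : (¬ IsZero X.right → 0 ≤ b.im ∧ (b.im = 0 → b.re < 0)) := fun h => hZB X.right h
  by_cases hl : IsZero X.left
  · -- left is zero, so a = 0 and right is nonzero
    have haz : a = 0 := by rw [ha, K0.mk_eq_zero_of_isZero hl, map_zero]
    have hrn : ¬ IsZero X.right := hcomp.resolve_left (not_not.mpr hl)
    obtain ⟨h1, h2⟩ := hB hrn
    rw [haz]
    simp only [Complex.zero_im, Complex.zero_re, mul_zero, zero_add]
    constructor
    · positivity
    · intro h; nlinarith [h2 (by nlinarith)]
  · by_cases hr : IsZero X.right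
    · have hbz : b = 0 := by rw [hb, K0.mk_eq_zero_of_isZero hr, map_zero]
      obtain ⟨h1, h2⟩ := hA hl
      rw [hbz]
      simp only [Complex.zero_im, Complex.zero_re, mul_zero, add_zero]
      constructor
      · positivity
      · intro h; nlinarith [h2 (by nlinarith)]
    · obtain ⟨h1, h2⟩ := hA hl
      obtain ⟨h3, h4⟩ := hB hr
      constructor
      · positivity
      · intro h
        have hia : a.im = 0 := by nlinarith
        have hib : b.im = 0 := by nlinarith
        nlinarith [h2 hia, h4 hib]
end

section
/- Let A, B, C be abelian categories, F : A ⥤ C right exact, G : B ⥤ C left exact. The comma category Comma F G is noetherian (every object satisfies the ascending chain condition on subobjects) if and only if both A and B are noetherian. -/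
open CategoryTheory CategoryTheory.Limits ZeroObject

namespace CommaNoethAux

variable {A B C : Type*} [Category A] [Category B] [Category C]
    [Abelian A] [Abelian B] [Abelian C]
    (F : A ⥤ C) [PreservesFiniteColimits F] (G : B ⥤ C) [PreservesFiniteLimits G]

lemma mono_of_components {X Y : Comma F G} (f : X ⟶ Y) (hl : Mono f.left) (hr : Mono f.right) :
    Mono f := by
  constructor
  intro Z u v h
  ext
  · have hL := congrArg CommaMorphism.left h
    simp only [Comma.comp_left] at hL
    exact (cancel_mono f.left).1 hL
  · have hR := congrArg CommaMorphism.right h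
    simp only [Comma.comp_right] at hR
    exact (cancel_mono f.right).1 hR

instance preservesFst : PreservesLimitsOfShape WalkingCospan (Comma.fst F G) where
  preservesLimit {K} :=
    preservesLimit_of_preserves_limit_cone
      (Comma.coneOfPreservesIsLimit K (limit.isLimit (K ⋙ Comma.fst F G))
        (limit.isLimit (K ⋙ Comma.snd F G)))
      (IsLimit.ofIsoLimit (limit.isLimit (K ⋙ Comma.fst F G))
        (Cones.ext (Iso.refl _) (by intro j; simp [Comma.coneOfPreserves])))

instance preservesSnd : PreservesLimitsOfShape WalkingCospan (Comma.snd F G) where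
  preservesLimit {K} :=
    preservesLimit_of_preserves_limit_cone
      (Comma.coneOfPreservesIsLimit K (limit.isLimit (K ⋙ Comma.fst F G))
        (limit.isLimit (K ⋙ Comma.snd F G)))
      (IsLimit.ofIsoLimit (limit.isLimit (K ⋙ Comma.snd F G))
        (Cones.ext (Iso.refl _) (by intro j; simp [Comma.coneOfPreserves])))

/-- The comma object with left component `X` and zero right component. -/
@[simps]
noncomputable def leftObj (X : A) : Comma F G := { left := X, right := 0, hom := 0 }

/-- The inclusion of a subobject of `X` as a comma object. -/
@[simps]
noncomputable def leftArr {X : A} (S : Subobject X) :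
    ({ left := (S : A), right := 0, hom := 0 } : Comma F G) ⟶ leftObj F G X :=
  { left := S.arrow, right := 𝟙 0, w := by simp; exact comp_zero }

instance {X : A} (S : Subobject X) : Mono (leftArr F G S) :=
  mono_of_components F G _ (show Mono S.arrow from inferInstance) (show Mono (𝟙 (0 : B)) from inferInstance)

lemma left_key {X : A} (S T : Subobject X) :
    S ≤ T ↔ Subobject.mk (leftArr F G S) ≤ Subobject.mk (leftArr F G T) := by
  constructor
  · intro h
    refine Subobject.mk_le_mk_of_comm
      { left := Subobject.ofLE S T h, right := 𝟙 0, w := by simp } ?_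
    ext <;> simp
    exact Subobject.ofLE_arrow h
  · intro h
    have hu := Subobject.ofMkLEMk_comp h
    have hL := congrArg CommaMorphism.left hu
    simp only [Comma.comp_left, leftArr_left] at hL
    exact Subobject.le_of_comm (Subobject.ofMkLEMk _ _ h).left hL

/-- The comma object with right component `Y` and zero left component. -/
@[simps]
noncomputable def rightObj (Y : B) : Comma F G := { left := 0, right := Y, hom := 0 }

/-- The inclusion of a subobject of `Y` as a comma object. -/
@[simps]
noncomputable def rightArr {Y : B} (S : Subobject Y) :
    ({ left := 0, right := (S : B), hom := 0 } : Comma F G) ⟶ rightObj F G Y :=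
  { left := 𝟙 0, right := S.arrow, w := by simp; exact comp_zero }

instance {Y : B} (S : Subobject Y) : Mono (rightArr F G S) :=
  mono_of_components F G _ (show Mono (𝟙 (0 : A)) from inferInstance) (show Mono S.arrow from inferInstance)

lemma right_key {Y : B} (S T : Subobject Y) :
    S ≤ T ↔ Subobject.mk (rightArr F G S) ≤ Subobject.mk (rightArr F G T) := by
  constructor
  · intro h
    refine Subobject.mk_le_mk_of_comm
      { left := 𝟙 0, right := Subobject.ofLE S T h, w := by simp } ?_
    ext <;> simp
    exact Subobject.ofLE_arrow h
  · intro h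
    have hu := Subobject.ofMkLEMk_comp h
    have hR := congrArg CommaMorphism.right hu
    simp only [Comma.comp_right, rightArr_right] at hR
    exact Subobject.le_of_comm (Subobject.ofMkLEMk _ _ h).right hR

end CommaNoethAux

/-- Let `A`, `B`, `C` be abelian categories, `F : A ⥤ C` right exact and
`G : B ⥤ C` left exact. The comma category `Comma F G` is noetherian (every object
satisfies the ascending chain condition on subobjects) if and only if both `A` and
`B` are noetherian. -/
theorem comma_noetherian_iff {A B C : Type*} [Category A] [Category B] [Category C]
    [Abelian A] [Abelian B] [Abelian C]
    (F : A ⥤ C) [PreservesFiniteColimits F] (G : B ⥤ C) [PreservesFiniteLimits G] :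
    (∀ X : Comma F G, IsNoetherianObject X) ↔
      (∀ X : A, IsNoetherianObject X) ∧ (∀ Y : B, IsNoetherianObject Y) := by
  open CommaNoethAux in
  constructor
  · intro hc
    constructor
    · intro X
      haveI := hc (leftObj F G X)
      haveI : WellFoundedGT (Subobject (leftObj F G X)) :=
        inferInstance
      have sm : StrictMono (fun S : Subobject X => Subobject.mk (leftArr F G S)) := by
        intro S T hST
        exact lt_iff_le_not_ge.2 ⟨(left_key F G S T).1 hST.le,
          fun c => hST.not_ge ((left_key F G T S).2 c)⟩
      exact ⟨sm.wellFoundedGT⟩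
    · intro Y
      haveI := hc (rightObj F G Y)
      haveI : WellFoundedGT (Subobject (rightObj F G Y)) :=
        inferInstance
      have sm : StrictMono (fun S : Subobject Y => Subobject.mk (rightArr F G S)) := by
        intro S T hST
        exact lt_iff_le_not_ge.2 ⟨(right_key F G S T).1 hST.le,
          fun c => hST.not_ge ((right_key F G T S).2 c)⟩
      exact ⟨sm.wellFoundedGT⟩
  · rintro ⟨hA, hB⟩ X
    haveI := hA X.left
    haveI := hB X.right
    haveI : WellFoundedGT (Subobject X.left) :=
      inferInstance
    haveI : WellFoundedGT (Subobject X.right) :=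
      inferInstance
    haveI instL : ∀ S : Subobject X, Mono S.arrow.left := fun S =>
      (Comma.fst F G).map_mono S.arrow
    haveI instR : ∀ S : Subobject X, Mono S.arrow.right := fun S =>
      (Comma.snd F G).map_mono S.arrow
    have mono_g : Monotone (fun S : Subobject X =>
        ((Subobject.mk S.arrow.left, Subobject.mk S.arrow.right) :
          Subobject X.left × Subobject X.right)) := by
      intro S T h
      constructor
      · refine Subobject.mk_le_mk_of_comm (Subobject.ofLE S T h).left ?_
        have := congrArg CommaMorphism.left (Subobject.ofLE_arrow h)
        simpa only [Comma.comp_left, Comma.comp_right] using this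
      · refine Subobject.mk_le_mk_of_comm (Subobject.ofLE S T h).right ?_
        have := congrArg CommaMorphism.right (Subobject.ofLE_arrow h)
        simpa only [Comma.comp_left, Comma.comp_right] using this
    have sm : StrictMono (fun S : Subobject X =>
        ((Subobject.mk S.arrow.left, Subobject.mk S.arrow.right) :
          Subobject X.left × Subobject X.right)) := by
      intro S T hST
      refine lt_iff_le_not_ge.2 ⟨mono_g hST.le, fun hle => hST.not_ge ?_⟩
      obtain ⟨h1, h2⟩ := hle
      have hwl : (Subobject.ofLE S T hST.le).left ≫ T.arrow.left = S.arrow.left := by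
        have := congrArg CommaMorphism.left (Subobject.ofLE_arrow hST.le)
        simpa only [Comma.comp_left, Comma.comp_right] using this
      have hwr : (Subobject.ofLE S T hST.le).right ≫ T.arrow.right = S.arrow.right := by
        have := congrArg CommaMorphism.right (Subobject.ofLE_arrow hST.le)
        simpa only [Comma.comp_left, Comma.comp_right] using this
      have hvc : Subobject.ofMkLEMk _ _ h1 ≫ S.arrow.left = T.arrow.left :=
        Subobject.ofMkLEMk_comp h1
      have hvc' : Subobject.ofMkLEMk _ _ h2 ≫ S.arrow.right = T.arrow.right :=
        Subobject.ofMkLEMk_comp h2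
      haveI : IsIso (Subobject.ofLE S T hST.le).left := by
        refine ⟨Subobject.ofMkLEMk _ _ h1, ?_, ?_⟩
        · rw [← cancel_mono S.arrow.left, Category.assoc, hvc, hwl, Category.id_comp]
        · rw [← cancel_mono T.arrow.left, Category.assoc, hwl, hvc, Category.id_comp]
      haveI : IsIso (Subobject.ofLE S T hST.le).right := by
        refine ⟨Subobject.ofMkLEMk _ _ h2, ?_, ?_⟩
        · rw [← cancel_mono S.arrow.right, Category.assoc, hvc', hwr, Category.id_comp]
        · rw [← cancel_mono T.arrow.right, Category.assoc, hwr, hvc', Category.id_comp]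
      refine Subobject.le_of_comm
        { left := inv (Subobject.ofLE S T hST.le).left
          right := inv (Subobject.ofLE S T hST.le).right
          w := by
            rw [Functor.map_inv, Functor.map_inv, IsIso.inv_comp_eq, ← Category.assoc,
              (Subobject.ofLE S T hST.le).w, Category.assoc, IsIso.hom_inv_id,
              Category.comp_id] } ?_
      ext
      · simp only [Comma.comp_left]
        rw [IsIso.inv_comp_eq, hwl]
      · simp only [Comma.comp_right]
        rw [IsIso.inv_comp_eq, hwr]
    exact ⟨sm.wellFoundedGT⟩
end

section
/- Let A, B, C be abelian categories, F : A ⥤ C right exact, G : B ⥤ C left exact. The comma category Comma F G is artinian (every object satisfies the descending chain condition on subobjects) if and only if both A and B are artinian. -/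
open CategoryTheory CategoryTheory.Limits

open ZeroObject

set_option linter.unusedSectionVars false

section Aux

variable {A B C : Type*} [Category A] [Category B] [Category C]
    [Abelian A] [Abelian B] [Abelian C]
    (F : A ⥤ C) [PreservesFiniteColimits F] (G : B ⥤ C) [PreservesFiniteLimits G]

/-- The right component of a mono in `Comma F G` is a mono. -/
lemma comma_mono_right {S X : Comma F G} (f : S ⟶ X) [Mono f] : Mono f.right := by
  apply Preadditive.mono_of_cancel_zero
  intro Z g hg
  let E : Comma F G := ⟨0, Z, 0⟩
  let m : E ⟶ S := ⟨0, g, by simp [E]⟩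
  let n : E ⟶ S := ⟨0, 0, by simp [E]⟩
  have h : m ≫ f = n ≫ f := by
    apply CommaMorphism.ext <;> simp [m, n, hg]
  have h2 := (cancel_mono f).mp h
  simpa [m, n] using congrArg CommaMorphism.right h2

/-- The left component of a mono in `Comma F G` is a mono. -/
lemma comma_mono_left {S X : Comma F G} (f : S ⟶ X) [Mono f] : Mono f.left := by
  haveI := comma_mono_right F G f
  haveI : Mono (G.map f.right) := G.map_mono f.right
  apply Preadditive.mono_of_cancel_zero
  intro Z g hg
  have hw : F.map g ≫ S.hom = 0 := by
    rw [← cancel_mono (G.map f.right), Category.assoc, ← f.w, zero_comp,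
      ← Functor.map_comp_assoc, hg, Functor.map_zero, zero_comp]
  let E : Comma F G := ⟨Z, 0, 0⟩
  let m : E ⟶ S := ⟨g, 0, by simp [E, hw]⟩
  let n : E ⟶ S := ⟨0, 0, by simp [E]⟩
  have h : m ≫ f = n ≫ f := by
    apply CommaMorphism.ext <;> simp [m, n, hg]
  have h2 := (cancel_mono f).mp h
  simpa [m, n] using congrArg CommaMorphism.left h2

set_option linter.unusedSectionVars false in
/-- A morphism in a comma category with mono components is a mono. -/
lemma comma_mono_of_components_s16 {L : A ⥤ C} {R : B ⥤ C} {S X : Comma L R} (f : S ⟶ X)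
    [Mono f.left] [Mono f.right] : Mono f := by
  constructor
  intro Z u v h
  have hl := congrArg CommaMorphism.left h
  have hr := congrArg CommaMorphism.right h
  simp only [Comma.comp_left, Comma.comp_right] at hl hr
  apply CommaMorphism.ext
  · exact (cancel_mono f.left).mp hl
  · exact (cancel_mono f.right).mp hr

/-- The comma object `(X, 0)`. -/
noncomputable def commaOfLeft (X : A) : Comma F G := ⟨X, 0, 0⟩

/-- The comma object `(0, Y)`. -/
noncomputable def commaOfRight (Y : B) : Comma F G := ⟨0, Y, 0⟩

/-- The comma morphism induced by a morphism in `A`. -/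
noncomputable def commaOfLeftMap {X X' : A} (f : X ⟶ X') : commaOfLeft F G X ⟶ commaOfLeft F G X' :=
  ⟨f, 𝟙 0, by simp [commaOfLeft]⟩

/-- The comma morphism induced by a morphism in `B`. -/
noncomputable def commaOfRightMap {Y Y' : B} (f : Y ⟶ Y') : commaOfRight F G Y ⟶ commaOfRight F G Y' :=
  ⟨𝟙 0, f, by simp [commaOfRight]⟩

instance {X X' : A} (f : X ⟶ X') [Mono f] : Mono (commaOfLeftMap F G f) := by
  have h1 : Mono (commaOfLeftMap F G f).left := by
    show Mono f; infer_instance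
  have h2 : Mono (commaOfLeftMap F G f).right := by
    show Mono (𝟙 (0 : B)); infer_instance
  exact comma_mono_of_components_s16 _

instance {Y Y' : B} (f : Y ⟶ Y') [Mono f] : Mono (commaOfRightMap F G f) := by
  have h1 : Mono (commaOfRightMap F G f).left := by
    show Mono (𝟙 (0 : A)); infer_instance
  have h2 : Mono (commaOfRightMap F G f).right := by
    show Mono f; infer_instance
  exact comma_mono_of_components_s16 _

lemma commaOfLeftMap_comp {X : A} {X1 X2 : A} (f : X1 ⟶ X2) (g : X2 ⟶ X) :
    commaOfLeftMap F G f ≫ commaOfLeftMap F G g = commaOfLeftMap F G (f ≫ g) := by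
  apply CommaMorphism.ext <;> simp [commaOfLeftMap, commaOfLeft]

lemma commaOfRightMap_comp {Y : B} {Y1 Y2 : B} (f : Y1 ⟶ Y2) (g : Y2 ⟶ Y) :
    commaOfRightMap F G f ≫ commaOfRightMap F G g = commaOfRightMap F G (f ≫ g) := by
  apply CommaMorphism.ext <;> simp [commaOfRightMap, commaOfRight]

theorem comma_artinian_iff' :
    (∀ X : Comma F G, IsArtinianObject X) ↔
      (∀ X : A, IsArtinianObject X) ∧ (∀ Y : B, IsArtinianObject Y) := by
  constructor
  · intro hC
    constructor
    · -- A is artinian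
      intro X
      haveI := hC (commaOfLeft F G X)
      haveI : WellFoundedLT (Subobject (commaOfLeft F G X)) :=
        inferInstance
      let Ψ : Subobject X → Subobject (commaOfLeft F G X) := fun S =>
        Subobject.mk (commaOfLeftMap F G S.arrow)
      have hmono : ∀ {S U : Subobject X}, S ≤ U → Ψ S ≤ Ψ U := by
        intro S U h
        exact Subobject.mk_le_mk_of_comm (commaOfLeftMap F G (Subobject.ofLE S U h))
          (by rw [commaOfLeftMap_comp, Subobject.ofLE_arrow])
      have hrefl : ∀ {S U : Subobject X}, Ψ S ≤ Ψ U → S ≤ U := by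
        intro S U h
        have := Subobject.ofMkLEMk_comp h
        have hl := congrArg CommaMorphism.left this
        simp only [Comma.comp_left] at hl
        exact Subobject.le_of_comm _ hl
      have hstrict : ∀ {S U : Subobject X}, S < U → Ψ S < Ψ U := fun {S U} h =>
        lt_of_le_of_ne (hmono h.le) (fun e => h.ne (le_antisymm h.le (hrefl e.ge)))
      exact ⟨⟨Subrelation.wf (fun {S U} h => hstrict h) (InvImage.wf Ψ (IsWellFounded.wf))⟩⟩
    · -- B is artinian
      intro Y
      haveI := hC (commaOfRight F G Y)
      haveI : WellFoundedLT (Subobject (commaOfRight F G Y)) :=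
        inferInstance
      let Ψ : Subobject Y → Subobject (commaOfRight F G Y) := fun S =>
        Subobject.mk (commaOfRightMap F G S.arrow)
      have hmono : ∀ {S U : Subobject Y}, S ≤ U → Ψ S ≤ Ψ U := by
        intro S U h
        exact Subobject.mk_le_mk_of_comm (commaOfRightMap F G (Subobject.ofLE S U h))
          (by rw [commaOfRightMap_comp, Subobject.ofLE_arrow])
      have hrefl : ∀ {S U : Subobject Y}, Ψ S ≤ Ψ U → S ≤ U := by
        intro S U h
        have := Subobject.ofMkLEMk_comp h
        have hr := congrArg CommaMorphism.right this
        simp only [Comma.comp_right] at hr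
        exact Subobject.le_of_comm _ hr
      have hstrict : ∀ {S U : Subobject Y}, S < U → Ψ S < Ψ U := fun {S U} h =>
        lt_of_le_of_ne (hmono h.le) (fun e => h.ne (le_antisymm h.le (hrefl e.ge)))
      exact ⟨⟨Subrelation.wf (fun {S U} h => hstrict h) (InvImage.wf Ψ (IsWellFounded.wf))⟩⟩
  · rintro ⟨hA, hB⟩ X
    haveI := hA X.left
    haveI := hB X.right
    haveI : WellFoundedLT (Subobject X.left) := inferInstance
    haveI : WellFoundedLT (Subobject X.right) := inferInstance
    let Φ : Subobject X → Subobject X.left × Subobject X.right := fun S =>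
      haveI := comma_mono_left F G S.arrow
      haveI := comma_mono_right F G S.arrow
      (Subobject.mk S.arrow.left, Subobject.mk S.arrow.right)
    have hstrict : ∀ {S U : Subobject X}, S < U → Φ S < Φ U := by
      intro S U h
      haveI := comma_mono_left F G S.arrow
      haveI := comma_mono_right F G S.arrow
      haveI := comma_mono_left F G U.arrow
      haveI := comma_mono_right F G U.arrow
      have hle : Φ S ≤ Φ U := by
        have harr := Subobject.ofLE_arrow h.le
        have hl := congrArg CommaMorphism.left harr
        have hr := congrArg CommaMorphism.right harr
        simp only [Comma.comp_left, Comma.comp_right] at hl hr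
        exact ⟨Subobject.mk_le_mk_of_comm _ hl, Subobject.mk_le_mk_of_comm _ hr⟩
      refine lt_of_le_of_ne hle (fun e => ?_)
      have hL : Subobject.mk S.arrow.left = Subobject.mk U.arrow.left := congrArg Prod.fst e
      have hR : Subobject.mk S.arrow.right = Subobject.mk U.arrow.right := congrArg Prod.snd e
      haveI : Mono (G.map S.arrow.right) := G.map_mono _
      have hvL : Subobject.ofMkLEMk U.arrow.left S.arrow.left hL.ge ≫ S.arrow.left
          = U.arrow.left := Subobject.ofMkLEMk_comp hL.ge
      have hvR : Subobject.ofMkLEMk U.arrow.right S.arrow.right hR.ge ≫ S.arrow.right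
          = U.arrow.right := Subobject.ofMkLEMk_comp hR.ge
      have hw : F.map (Subobject.ofMkLEMk U.arrow.left S.arrow.left hL.ge)
            ≫ (Subobject.underlying.obj S).hom
          = (Subobject.underlying.obj U).hom
            ≫ G.map (Subobject.ofMkLEMk U.arrow.right S.arrow.right hR.ge) := by
        rw [← cancel_mono (G.map S.arrow.right)]
        rw [Category.assoc, ← S.arrow.w, ← Functor.map_comp_assoc, hvL,
          Category.assoc, ← Functor.map_comp, hvR, U.arrow.w]
      have hUS : U ≤ S := Subobject.le_of_comm
        (⟨Subobject.ofMkLEMk U.arrow.left S.arrow.left hL.ge,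
          Subobject.ofMkLEMk U.arrow.right S.arrow.right hR.ge, hw⟩ :
          (U : Comma F G) ⟶ (S : Comma F G))
        (by apply CommaMorphism.ext <;> simp [hvL, hvR])
      exact h.not_ge hUS
    exact ⟨⟨Subrelation.wf (fun {S U} h => hstrict h) (InvImage.wf Φ (IsWellFounded.wf))⟩⟩

end Aux


/-- Let `A`, `B`, `C` be abelian categories, `F : A ⥤ C` right exact and
`G : B ⥤ C` left exact. The comma category `Comma F G` is artinian (every object
satisfies the descending chain condition on subobjects) if and only if both `A` and
`B` are artinian. -/
theorem comma_artinian_iff {A B C : Type*} [Category A] [Category B] [Category C]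
    [Abelian A] [Abelian B] [Abelian C]
    (F : A ⥤ C) [PreservesFiniteColimits F] (G : B ⥤ C) [PreservesFiniteLimits G] :
    (∀ X : Comma F G, IsArtinianObject X) ↔
      (∀ X : A, IsArtinianObject X) ∧ (∀ Y : B, IsArtinianObject Y) := by
  exact comma_artinian_iff' F G
end

section
/- Let A, B, C be abelian categories, F : A ⥤ C right exact, G : B ⥤ C left exact. Every object of A and every object of B admits a Jordan–Hölder filtration (a finite filtration with simple quotients) if and only if every object of the comma category Comma F G admits a Jordan–Hölder filtration. -/
open CategoryTheory CategoryTheory.Limits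

section
variable {D : Type*} [Category D] [Abelian D]

/-- The quotient object `Q/P` associated to subobjects `P ≤ Q` of a fixed object. -/
noncomputable def subQuot {X : D} {P Q : Subobject X} (h : P ≤ Q) : D :=
  cokernel (Subobject.ofLE P Q h)

/-- `X` admits a Jordan–Hölder filtration: a finite chain
`⊥ = c 0 ≤ c 1 ≤ ⋯ ≤ c n = ⊤` of subobjects whose successive quotients are simple. -/
def HasJHFiltration (X : D) : Prop :=
  ∃ (n : ℕ) (c : Fin (n + 1) → Subobject X) (hc : Monotone c),
    c 0 = ⊥ ∧ c (Fin.last n) = ⊤ ∧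
    ∀ i : Fin n, Simple (subQuot (hc (Fin.castSucc_lt_succ : Fin.castSucc i < Fin.succ i).le))

end

open ZeroObject
set_option linter.unusedSectionVars false
set_option maxHeartbeats 1600000

section Helpers

variable {D : Type*} [Category D] [Abelian D]

lemma JH.mono_of_src_isZero {X Y : D} (h : IsZero X) (f : X ⟶ Y) : Mono f :=
  ⟨fun g g' _ => h.eq_of_tgt g g'⟩

lemma JH.epi_of_tgt_isZero {X Y : D} (h : IsZero Y) (f : X ⟶ Y) : Epi f :=
  ⟨fun g g' _ => h.eq_of_src g g'⟩

lemma JH.isZero_cokernel_of_isZero_tgt {X Y : D} (h : IsZero Y) (f : X ⟶ Y) :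
    IsZero (cokernel f) :=
  IsZero.of_epi_eq_zero (cokernel.π f) (h.eq_of_src _ _)

lemma JH.isZero_cokernel_of_epi {X Y : D} (f : X ⟶ Y) [Epi f] :
    IsZero (cokernel f) :=
  IsZero.of_epi_eq_zero (cokernel.π f)
    ((cancel_epi f).1 (by rw [cokernel.condition, comp_zero]))

lemma JH.isZero_subobject_of_isZero {X : D} (h : IsZero X) (P : Subobject X) :
    IsZero (P : D) :=
  IsZero.of_mono_eq_zero P.arrow (h.eq_of_tgt _ _)

lemma JH.isZero_bot_subobject (X : D) : IsZero ((⊥ : Subobject X) : D) :=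
  (isZero_zero D).of_iso Subobject.botCoeIsoZero

lemma JH.mk_eq_bot_of_isZero {Z X : D} (f : Z ⟶ X) [Mono f] (h : IsZero Z) :
    Subobject.mk f = ⊥ :=
  Subobject.mk_eq_bot_iff_zero.2 (h.eq_of_src _ _)

/-- Transport simplicity of a subquotient along equalities of the subobjects. -/
lemma JH.simple_subQuot_of_eq {X : D} {P Q P' Q' : Subobject X} {h : P ≤ Q} {h' : P' ≤ Q'}
    (hP : P = P') (hQ : Q = Q') (hs : Simple (subQuot h)) : Simple (subQuot h') := by
  subst hP; subst hQ; exact hs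

/-- A subquotient associated to `mk a ≤ mk b` is a cokernel of the comparison map. -/
noncomputable def JH.subQuotMkIso {X P Q : D} (a : P ⟶ X) (b : Q ⟶ X) [Mono a] [Mono b]
    (u : P ⟶ Q) (w : u ≫ b = a) (h : Subobject.mk a ≤ Subobject.mk b) :
    subQuot h ≅ cokernel u :=
  cokernel.mapIso _ u (Subobject.underlyingIso a) (Subobject.underlyingIso b) (by
    refine (cancel_mono b).1 ?_
    rw [Category.assoc, Category.assoc, Subobject.underlyingIso_hom_comp_eq_mk,
      Subobject.ofLE_arrow, w, Subobject.underlyingIso_hom_comp_eq_mk])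

end Helpers

section Glue

variable {D : Type*} [Category D] [Abelian D]


private def JH.glueChain {X : D} {m n : ℕ} (c : Fin (m + 1) → Subobject X)
    (d : Fin (n + 1) → Subobject X) : Fin (m + n + 1) → Subobject X := fun i =>
  if h : (i : ℕ) ≤ m then c ⟨i, by omega⟩ else d ⟨(i : ℕ) - m, by omega⟩

private lemma JH.glueChain_le {X : D} {m n : ℕ} (c : Fin (m + 1) → Subobject X)
    (d : Fin (n + 1) → Subobject X) {i : Fin (m + n + 1)} (h : (i : ℕ) ≤ m) :
    JH.glueChain c d i = c ⟨i, by omega⟩ := dif_pos h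

private lemma JH.glueChain_gt {X : D} {m n : ℕ} (c : Fin (m + 1) → Subobject X)
    (d : Fin (n + 1) → Subobject X) {i : Fin (m + n + 1)} (h : ¬ (i : ℕ) ≤ m) :
    JH.glueChain c d i = d ⟨(i : ℕ) - m, by have := i.isLt; omega⟩ := dif_neg h

lemma JH.glue {X : D} {m n : ℕ} (c : Fin (m + 1) → Subobject X) (d : Fin (n + 1) → Subobject X)
    (hc : Monotone c) (hd : Monotone d) (hcd : c (Fin.last m) = d 0)
    (h0 : c 0 = ⊥) (h1 : d (Fin.last n) = ⊤)
    (sc : ∀ i : Fin m, Simple (subQuot (hc (Fin.castSucc_lt_succ : Fin.castSucc i < Fin.succ i).le)))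
    (sd : ∀ i : Fin n, Simple (subQuot (hd (Fin.castSucc_lt_succ : Fin.castSucc i < Fin.succ i).le))) :
    HasJHFiltration X := by
  have emono : Monotone (JH.glueChain c d) := by
    intro i j hij
    have hij' : (i : ℕ) ≤ (j : ℕ) := hij
    by_cases hi : (i : ℕ) ≤ m <;> by_cases hj : (j : ℕ) ≤ m
    · rw [JH.glueChain_le c d hi, JH.glueChain_le c d hj]
      exact hc (Fin.mk_le_mk.2 hij')
    · rw [JH.glueChain_le c d hi, JH.glueChain_gt c d hj]
      exact le_trans (hc (Fin.le_last _)) (le_of_eq hcd |>.trans (hd (Fin.zero_le _)))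
    · exact absurd (le_trans hij' hj) hi
    · rw [JH.glueChain_gt c d hi, JH.glueChain_gt c d hj]
      exact hd (Fin.mk_le_mk.2 (by omega))
  refine ⟨m + n, JH.glueChain c d, emono, ?_, ?_, ?_⟩
  · rw [JH.glueChain_le c d (by simp)]
    exact (congrArg c (Fin.ext (by simp))).trans h0
  · by_cases hn : n = 0
    · subst hn
      rw [JH.glueChain_le c d (le_of_eq rfl)]
      refine (congrArg c (Fin.ext (by simp [Fin.val_last]))).trans (hcd.trans ?_)
      exact (congrArg d (Fin.ext (by simp [Fin.val_last]))).trans h1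
    · rw [JH.glueChain_gt c d (by simp [Fin.val_last]; omega)]
      exact (congrArg d (Fin.ext (by simp only [Fin.val_last]; omega))).trans h1
  · intro i
    have hcs : ((i.castSucc : Fin (m + n + 1)) : ℕ) = (i : ℕ) := rfl
    have hs : ((i.succ : Fin (m + n + 1)) : ℕ) = (i : ℕ) + 1 := rfl
    by_cases h1' : (i : ℕ) + 1 ≤ m
    · refine JH.simple_subQuot_of_eq ?_ ?_ (sc ⟨i, by omega⟩)
      · rw [JH.glueChain_le c d (by rw [hcs]; omega)]
        exact congrArg c (Fin.ext (by simp))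
      · rw [JH.glueChain_le c d (by rw [hs]; omega)]
        exact congrArg c (Fin.ext (by simp))
    · by_cases h2 : (i : ℕ) ≤ m
      · -- the junction step `i = m`
        have him : (i : ℕ) = m := by omega
        have hn : 0 < n := by have := i.isLt; omega
        refine JH.simple_subQuot_of_eq ?_ ?_ (sd ⟨0, hn⟩)
        · rw [JH.glueChain_le c d (by rw [hcs]; omega)]
          refine (congrArg d (Fin.ext (by simp))).trans (hcd.symm.trans ?_)
          exact congrArg c (Fin.ext (by simp [Fin.last, him]))
        · rw [JH.glueChain_gt c d (by rw [hs]; omega)]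
          exact congrArg d (Fin.ext (by simp; omega))
      · refine JH.simple_subQuot_of_eq ?_ ?_ (sd ⟨(i : ℕ) - m, by have := i.isLt; omega⟩)
        · rw [JH.glueChain_gt c d (by rw [hcs]; omega)]
          exact congrArg d (Fin.ext (by simp))
        · rw [JH.glueChain_gt c d (by rw [hs]; omega)]
          exact congrArg d (Fin.ext (by simp; omega))


end Glue

section FunctorZero


variable {A C : Type*} [Category A] [Category C] [Abelian A] [Abelian C]

lemma JH.map_isZero_right_exact (F : A ⥤ C) [PreservesFiniteColimits F] {X : A} (h : IsZero X) :
    IsZero (F.obj X) := by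
  have h1 : IsInitial (F.obj X) := IsInitial.isInitialObj F _ h.isInitial
  exact (isZero_zero C).of_iso (h1.uniqueUpToIso (isZero_zero C).isInitial)

lemma JH.map_isZero_left_exact (G : A ⥤ C) [PreservesFiniteLimits G] {X : A} (h : IsZero X) :
    IsZero (G.obj X) := by
  have h1 : IsTerminal (G.obj X) := IsTerminal.isTerminalObj G _ h.isTerminal
  exact (isZero_zero C).of_iso (h1.uniqueUpToIso (isZero_zero C).isTerminal)

lemma JH.presZero_right_exact (F : A ⥤ C) [PreservesFiniteColimits F] :
    F.PreservesZeroMorphisms := by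
  constructor
  intro X Y
  have h0 : IsZero (F.obj (0 : A)) := JH.map_isZero_right_exact F (isZero_zero A)
  calc F.map (0 : X ⟶ Y) = F.map ((0 : X ⟶ (0 : A)) ≫ (0 : (0 : A) ⟶ Y)) := by rw [zero_comp]
    _ = F.map (0 : X ⟶ (0 : A)) ≫ F.map (0 : (0 : A) ⟶ Y) := F.map_comp _ _
    _ = 0 := by rw [h0.eq_of_tgt (F.map (0 : X ⟶ (0 : A))) 0, zero_comp]

lemma JH.presZero_left_exact (G : A ⥤ C) [PreservesFiniteLimits G] :
    G.PreservesZeroMorphisms := by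
  constructor
  intro X Y
  have h0 : IsZero (G.obj (0 : A)) := JH.map_isZero_left_exact G (isZero_zero A)
  calc G.map (0 : X ⟶ Y) = G.map ((0 : X ⟶ (0 : A)) ≫ (0 : (0 : A) ⟶ Y)) := by rw [zero_comp]
    _ = G.map (0 : X ⟶ (0 : A)) ≫ G.map (0 : (0 : A) ⟶ Y) := G.map_comp _ _
    _ = 0 := by rw [h0.eq_of_tgt (G.map (0 : X ⟶ (0 : A))) 0, zero_comp]

end FunctorZero

section CommaBasic

variable {A B C : Type*} [Category A] [Category B] [Category C]
    [Abelian A] [Abelian B] [Abelian C]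
    (F : A ⥤ C) [PreservesFiniteColimits F] (G : B ⥤ C) [PreservesFiniteLimits G]
    [Abelian (Comma F G)]

/-- The componentwise zero object of the comma category. -/
noncomputable abbrev JH.commaZero : Comma F G where
  left := 0
  right := 0
  hom := 0

lemma JH.isZero_commaZero : IsZero (JH.commaZero F G) := by
  constructor
  · intro W
    refine ⟨⟨⟨⟨0, 0, ?_⟩⟩, fun g => ?_⟩⟩
    · exact (JH.map_isZero_right_exact F (isZero_zero A)).eq_of_src _ _
    · apply CommaMorphism.ext
      · exact (isZero_zero A).eq_of_src _ _
      · exact (isZero_zero B).eq_of_src _ _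
  · intro W
    refine ⟨⟨⟨⟨0, 0, ?_⟩⟩, fun g => ?_⟩⟩
    · exact (JH.map_isZero_left_exact G (isZero_zero B)).eq_of_tgt _ _
    · apply CommaMorphism.ext
      · exact (isZero_zero A).eq_of_tgt _ _
      · exact (isZero_zero B).eq_of_tgt _ _

lemma JH.zero_left {V W : Comma F G} : (0 : V ⟶ W).left = 0 := by
  have h := JH.isZero_commaZero F G
  have e : (0 : V ⟶ W) = h.from_ V ≫ h.to_ W := by
    rw [h.eq_of_tgt (h.from_ V) 0, zero_comp]
  rw [e, Comma.comp_left, (isZero_zero A).eq_of_tgt (h.from_ V).left 0, zero_comp]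

lemma JH.zero_right {V W : Comma F G} : (0 : V ⟶ W).right = 0 := by
  have h := JH.isZero_commaZero F G
  have e : (0 : V ⟶ W) = h.from_ V ≫ h.to_ W := by
    rw [h.eq_of_tgt (h.from_ V) 0, zero_comp]
  rw [e, Comma.comp_right, (isZero_zero B).eq_of_tgt (h.from_ V).right 0, zero_comp]

lemma JH.hom_eq_zero_iff {V W : Comma F G} (f : V ⟶ W) :
    f = 0 ↔ f.left = 0 ∧ f.right = 0 := by
  constructor
  · rintro rfl
    exact ⟨JH.zero_left F G, JH.zero_right F G⟩
  · rintro ⟨h1, h2⟩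
    apply CommaMorphism.ext
    · rw [h1, JH.zero_left]
    · rw [h2, JH.zero_right]

lemma JH.isZero_comma_iff (V : Comma F G) :
    IsZero V ↔ IsZero V.left ∧ IsZero V.right := by
  constructor
  · intro h
    have h1 : 𝟙 V = 0 := (IsZero.iff_id_eq_zero V).1 h
    have h2 := congrArg CommaMorphism.left h1
    have h3 := congrArg CommaMorphism.right h1
    rw [Comma.id_left, JH.zero_left] at h2
    rw [Comma.id_right, JH.zero_right] at h3
    exact ⟨(IsZero.iff_id_eq_zero V.left).2 h2, (IsZero.iff_id_eq_zero V.right).2 h3⟩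
  · rintro ⟨h1, h2⟩
    rw [IsZero.iff_id_eq_zero, JH.hom_eq_zero_iff]
    exact ⟨h1.eq_of_src _ _, h2.eq_of_src _ _⟩

lemma JH.isIso_of_components {V W : Comma F G} (f : V ⟶ W) (h1 : IsIso f.left)
    (h2 : IsIso f.right) : IsIso f := by
  refine ⟨⟨⟨inv f.left, inv f.right, ?_⟩, ?_, ?_⟩⟩
  · rw [Functor.map_inv, Functor.map_inv, IsIso.inv_comp_eq, ← Category.assoc,
      IsIso.eq_comp_inv]
    exact f.w.symm
  · apply CommaMorphism.ext <;> simp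
  · apply CommaMorphism.ext <;> simp

lemma JH.isIso_left_of_isIso {V W : Comma F G} (f : V ⟶ W) (h : IsIso f) : IsIso f.left := by
  refine ⟨⟨(inv f).left, ?_, ?_⟩⟩
  · rw [← Comma.comp_left, IsIso.hom_inv_id, Comma.id_left]
  · rw [← Comma.comp_left, IsIso.inv_hom_id, Comma.id_left]

lemma JH.isIso_right_of_isIso {V W : Comma F G} (f : V ⟶ W) (h : IsIso f) : IsIso f.right := by
  refine ⟨⟨(inv f).right, ?_, ?_⟩⟩
  · rw [← Comma.comp_right, IsIso.hom_inv_id, Comma.id_right]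
  · rw [← Comma.comp_right, IsIso.inv_hom_id, Comma.id_right]

lemma JH.mono_of_components {V W : Comma F G} (f : V ⟶ W) (h1 : Mono f.left)
    (h2 : Mono f.right) : Mono f := by
  constructor
  intro Z g g' hgg
  apply CommaMorphism.ext
  · exact (cancel_mono f.left).1 (by rw [← Comma.comp_left, hgg, Comma.comp_left])
  · exact (cancel_mono f.right).1 (by rw [← Comma.comp_right, hgg, Comma.comp_right])

/-- The componentwise kernel of a morphism in the comma category. -/
@[simps]
noncomputable abbrev JH.commaKer {V W : Comma F G} (f : V ⟶ W) : Comma F G where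
  left := kernel f.left
  right := kernel f.right
  hom := by
    haveI := JH.presZero_right_exact F
    exact kernel.lift (G.map f.right) (F.map (kernel.ι f.left) ≫ V.hom)
      (by rw [Category.assoc, ← f.w, ← Category.assoc, ← F.map_comp, kernel.condition,
        F.map_zero, zero_comp]) ≫ inv (kernelComparison f.right G)

/-- The componentwise kernel inclusion. -/
noncomputable def JH.commaKerι {V W : Comma F G} (f : V ⟶ W) : JH.commaKer F G f ⟶ V where
  left := kernel.ι f.left
  right := kernel.ι f.right
  w := by
    haveI := JH.presZero_right_exact F
    rw [JH.commaKer_hom, Category.assoc]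
    rw [show inv (kernelComparison f.right G) ≫ G.map (kernel.ι f.right)
        = kernel.ι (G.map f.right) by rw [IsIso.inv_comp_eq, kernelComparison_comp_ι]]
    rw [kernel.lift_ι]

lemma JH.commaKerι_comp {V W : Comma F G} (f : V ⟶ W) : JH.commaKerι F G f ≫ f = 0 := by
  rw [JH.hom_eq_zero_iff]
  constructor
  · rw [Comma.comp_left]; exact kernel.condition f.left
  · rw [Comma.comp_right]; exact kernel.condition f.right

lemma JH.mono_left_of_mono {V W : Comma F G} (f : V ⟶ W) [Mono f] : Mono f.left := by
  have h : JH.commaKerι F G f = 0 :=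
    (cancel_mono f).1 (by rw [JH.commaKerι_comp, zero_comp])
  have h2 := congrArg CommaMorphism.left h
  rw [JH.zero_left] at h2
  exact Abelian.mono_of_kernel_ι_eq_zero _ h2

lemma JH.mono_right_of_mono {V W : Comma F G} (f : V ⟶ W) [Mono f] : Mono f.right := by
  have h : JH.commaKerι F G f = 0 :=
    (cancel_mono f).1 (by rw [JH.commaKerι_comp, zero_comp])
  have h2 := congrArg CommaMorphism.right h
  rw [JH.zero_right] at h2
  exact Abelian.mono_of_kernel_ι_eq_zero _ h2

/-- The componentwise cokernel of a morphism in the comma category. -/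
@[simps]
noncomputable abbrev JH.commaCoker {V W : Comma F G} (f : V ⟶ W) : Comma F G where
  left := cokernel f.left
  right := cokernel f.right
  hom := by
    haveI := JH.presZero_left_exact G
    exact inv (cokernelComparison f.left F) ≫
      cokernel.desc (F.map f.left) (W.hom ≫ G.map (cokernel.π f.right))
      (by rw [← Category.assoc, f.w, Category.assoc, ← G.map_comp, cokernel.condition,
        G.map_zero, comp_zero])

/-- The componentwise cokernel projection. -/
noncomputable def JH.commaCokerπ {V W : Comma F G} (f : V ⟶ W) : W ⟶ JH.commaCoker F G f where
  left := cokernel.π f.left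
  right := cokernel.π f.right
  w := by
    haveI := JH.presZero_left_exact G
    rw [JH.commaCoker_hom, ← Category.assoc]
    rw [show F.map (cokernel.π f.left) ≫ inv (cokernelComparison f.left F)
        = cokernel.π (F.map f.left) by rw [IsIso.comp_inv_eq, π_comp_cokernelComparison]]
    rw [cokernel.π_desc]

lemma JH.comp_commaCokerπ {V W : Comma F G} (f : V ⟶ W) : f ≫ JH.commaCokerπ F G f = 0 := by
  rw [JH.hom_eq_zero_iff]
  constructor
  · rw [Comma.comp_left]; exact cokernel.condition f.left
  · rw [Comma.comp_right]; exact cokernel.condition f.right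

/-- The descent morphism out of the componentwise cokernel. -/
@[simps]
noncomputable def JH.commaCokerDesc {V W : Comma F G} (f : V ⟶ W) (s : CokernelCofork f) :
    JH.commaCoker F G f ⟶ s.pt where
  left := cokernel.desc f.left s.π.left
    (by rw [← Comma.comp_left, CokernelCofork.condition, JH.zero_left])
  right := cokernel.desc f.right s.π.right
    (by rw [← Comma.comp_right, CokernelCofork.condition, JH.zero_right])
  w := by
    haveI := JH.presZero_left_exact G
    haveI : Epi (cokernel.π (F.map f.left) ≫ cokernelComparison f.left F) := epi_comp _ _
    refine (cancel_epi (cokernel.π (F.map f.left) ≫ cokernelComparison f.left F)).1 ?_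
    rw [Category.assoc, Category.assoc, π_comp_cokernelComparison_assoc, ← F.map_comp_assoc,
      cokernel.π_desc, JH.commaCoker_hom]
    rw [show cokernelComparison f.left F ≫ (inv (cokernelComparison f.left F) ≫
        cokernel.desc (F.map f.left) (W.hom ≫ G.map (cokernel.π f.right)) _) ≫
        G.map (cokernel.desc f.right s.π.right _) =
        cokernel.desc (F.map f.left) (W.hom ≫ G.map (cokernel.π f.right)) _ ≫
        G.map (cokernel.desc f.right s.π.right _) by
      rw [← Category.assoc, ← Category.assoc, IsIso.hom_inv_id, Category.id_comp]]
    rw [cokernel.π_desc_assoc, Category.assoc, ← G.map_comp, cokernel.π_desc]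
    exact s.π.w

/-- The componentwise cokernel is a cokernel in the comma category. -/
noncomputable def JH.commaCokerIsColimit {V W : Comma F G} (f : V ⟶ W) :
    IsColimit (CokernelCofork.ofπ (JH.commaCokerπ F G f) (JH.comp_commaCokerπ F G f)) := by
  refine Cofork.IsColimit.mk _ (fun s => JH.commaCokerDesc F G f s) (fun s => ?_)
    (fun s m hm => ?_)
  · apply CommaMorphism.ext
    · rw [Comma.comp_left, JH.commaCokerDesc_left]
      exact cokernel.π_desc _ _ _
    · rw [Comma.comp_right, JH.commaCokerDesc_right]
      exact cokernel.π_desc _ _ _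
  · have hml := congrArg CommaMorphism.left hm
    have hmr := congrArg CommaMorphism.right hm
    rw [Comma.comp_left] at hml
    rw [Comma.comp_right] at hmr
    apply CommaMorphism.ext
    · rw [JH.commaCokerDesc_left]
      refine (cancel_epi (cokernel.π f.left)).1 ?_
      rw [cokernel.π_desc]
      exact hml
    · rw [JH.commaCokerDesc_right]
      refine (cancel_epi (cokernel.π f.right)).1 ?_
      rw [cokernel.π_desc]
      exact hmr

/-- The chosen cokernel in the comma category agrees with the componentwise one. -/
noncomputable def JH.cokernelCommaIso {V W : Comma F G} (f : V ⟶ W) :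
    cokernel f ≅ JH.commaCoker F G f :=
  IsColimit.coconePointUniqueUpToIso (colimit.isColimit _) (JH.commaCokerIsColimit F G f)


end CommaBasic

section CommaSimple

variable {A B C : Type*} [Category A] [Category B] [Category C]
    [Abelian A] [Abelian B] [Abelian C]
    (F : A ⥤ C) [PreservesFiniteColimits F] (G : B ⥤ C) [PreservesFiniteLimits G]
    [Abelian (Comma F G)]

lemma JH.simple_iff_left {S : Comma F G} (hz : IsZero S.right) :
    Simple S ↔ Simple S.left := by
  constructor
  · intro hS
    haveI := hS
    constructor
    intro P p hp
    haveI := hp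
    let T : Comma F G := { left := P, right := S.right, hom := F.map p ≫ S.hom }
    let q : T ⟶ S := { left := p, right := 𝟙 S.right, w := by simp [T] }
    haveI hq : Mono q := JH.mono_of_components F G q hp inferInstance
    have key := Simple.mono_isIso_iff_nonzero (Y := T) q
    constructor
    · intro hiso hp0
      have hqiso : IsIso q := JH.isIso_of_components F G q hiso inferInstance
      refine key.1 hqiso ?_
      rw [JH.hom_eq_zero_iff]
      exact ⟨hp0, hz.eq_of_src _ _⟩
    · intro hp0
      have hq0 : q ≠ 0 := fun hq => hp0 (by
        have h2 := congrArg CommaMorphism.left hq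
        rw [JH.zero_left] at h2
        exact h2)
      exact JH.isIso_left_of_isIso F G q (key.2 hq0)
  · intro hL
    haveI := hL
    constructor
    intro T q hq
    haveI := hq
    haveI h1 : Mono q.left := JH.mono_left_of_mono F G q
    haveI h1' : Mono q.right := JH.mono_right_of_mono F G q
    have hq0 : q.right = 0 := hz.eq_of_tgt _ _
    have hTr : IsZero T.right := IsZero.of_mono_eq_zero q.right hq0
    have hiso_r : IsIso q.right := ⟨⟨0, hTr.eq_of_src _ _, hz.eq_of_src _ _⟩⟩
    constructor
    · intro hiso h0
      haveI := hiso
      have hl : q.left ≠ 0 := (Simple.mono_isIso_iff_nonzero q.left).1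
        (JH.isIso_left_of_isIso F G q hiso)
      apply hl
      have h2 := congrArg CommaMorphism.left h0
      rw [JH.zero_left] at h2
      exact h2
    · intro h0
      have hl0 : q.left ≠ 0 := fun hl => h0 (by
        rw [JH.hom_eq_zero_iff]; exact ⟨hl, hq0⟩)
      exact JH.isIso_of_components F G q ((Simple.mono_isIso_iff_nonzero q.left).2 hl0) hiso_r

lemma JH.simple_iff_right {S : Comma F G} (hz : IsZero S.left) :
    Simple S ↔ Simple S.right := by
  constructor
  · intro hS
    haveI := hS
    constructor
    intro P p hp
    haveI := hp
    let T : Comma F G := { left := S.left, right := P, hom := 0 }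
    let q : T ⟶ S := ⟨𝟙 S.left, p, (JH.map_isZero_right_exact F hz).eq_of_src _ _⟩
    haveI hq : Mono q := JH.mono_of_components F G q inferInstance hp
    have key := Simple.mono_isIso_iff_nonzero (Y := T) q
    constructor
    · intro hiso hp0
      have hqiso : IsIso q := JH.isIso_of_components F G q inferInstance hiso
      refine key.1 hqiso ?_
      rw [JH.hom_eq_zero_iff]
      exact ⟨hz.eq_of_tgt _ _, hp0⟩
    · intro hp0
      have hq0 : q ≠ 0 := fun hq => hp0 (by
        have h2 := congrArg CommaMorphism.right hq
        rw [JH.zero_right] at h2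
        exact h2)
      exact JH.isIso_right_of_isIso F G q (key.2 hq0)
  · intro hR
    haveI := hR
    constructor
    intro T q hq
    haveI := hq
    haveI h1 : Mono q.right := JH.mono_right_of_mono F G q
    haveI h1' : Mono q.left := JH.mono_left_of_mono F G q
    have hq0 : q.left = 0 := hz.eq_of_tgt _ _
    have hTl : IsZero T.left := IsZero.of_mono_eq_zero q.left hq0
    have hiso_l : IsIso q.left := ⟨⟨0, hTl.eq_of_src _ _, hz.eq_of_src _ _⟩⟩
    constructor
    · intro hiso h0
      haveI := hiso
      have hr : q.right ≠ 0 := (Simple.mono_isIso_iff_nonzero q.right).1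
        (JH.isIso_right_of_isIso F G q hiso)
      apply hr
      have h2 := congrArg CommaMorphism.right h0
      rw [JH.zero_right] at h2
      exact h2
    · intro h0
      have hr0 : q.right ≠ 0 := fun hr => h0 (by
        rw [JH.hom_eq_zero_iff]; exact ⟨hq0, hr⟩)
      exact JH.isIso_of_components F G q hiso_l ((Simple.mono_isIso_iff_nonzero q.right).2 hr0)

end CommaSimple

section CommaSubobjects

variable {A B C : Type*} [Category A] [Category B] [Category C]
    [Abelian A] [Abelian B] [Abelian C]
    (F : A ⥤ C) [PreservesFiniteColimits F] (G : B ⥤ C) [PreservesFiniteLimits G]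
    [Abelian (Comma F G)]

/-- Taking left components of a subobject of a comma object. -/
noncomputable def JH.lSub (W : Comma F G) (S : Subobject W) : Subobject W.left :=
  haveI := JH.mono_left_of_mono F G S.arrow
  Subobject.mk S.arrow.left

lemma JH.lSub_monotone (W : Comma F G) : Monotone (JH.lSub F G W) := by
  intro S T h
  haveI := JH.mono_left_of_mono F G S.arrow
  haveI := JH.mono_left_of_mono F G T.arrow
  refine Subobject.mk_le_mk_of_comm (Subobject.ofLE S T h).left ?_
  rw [← Comma.comp_left, Subobject.ofLE_arrow]

lemma JH.lSub_bot (W : Comma F G) : JH.lSub F G W ⊥ = ⊥ := by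
  haveI := JH.mono_left_of_mono F G (⊥ : Subobject W).arrow
  exact JH.mk_eq_bot_of_isZero _
    ((JH.isZero_comma_iff F G _).1 (JH.isZero_bot_subobject W)).1

lemma JH.lSub_top (W : Comma F G) : JH.lSub F G W ⊤ = ⊤ := by
  haveI := JH.mono_left_of_mono F G (⊤ : Subobject W).arrow
  haveI : IsIso ((⊤ : Subobject W).arrow.left) :=
    JH.isIso_left_of_isIso F G _ inferInstance
  exact Subobject.mk_eq_top_of_isIso _

lemma JH.lSub_simple (W : Comma F G) (hz : IsZero W.right) {S T : Subobject W} (h : S ≤ T)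
    (hs : Simple (subQuot h)) : Simple (subQuot (JH.lSub_monotone F G W h)) := by
  haveI := JH.mono_left_of_mono F G S.arrow
  haveI := JH.mono_left_of_mono F G T.arrow
  haveI := JH.mono_right_of_mono F G T.arrow
  set g := Subobject.ofLE S T h with hg
  haveI : Simple (cokernel g) := hs
  have hcs : Simple (JH.commaCoker F G g) := Simple.of_iso (JH.cokernelCommaIso F G g).symm
  have hTz : IsZero ((T : Comma F G).right) :=
    IsZero.of_mono_eq_zero (T.arrow.right) (hz.eq_of_tgt _ _)
  have hzc : IsZero (cokernel g.right) := JH.isZero_cokernel_of_isZero_tgt hTz g.right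
  haveI hsl : Simple (cokernel g.left) := (JH.simple_iff_left F G hzc).1 hcs
  exact Simple.of_iso (JH.subQuotMkIso S.arrow.left T.arrow.left g.left
    (by rw [← Comma.comp_left, hg, Subobject.ofLE_arrow]) _)

/-- Taking right components of a subobject of a comma object. -/
noncomputable def JH.rSub (W : Comma F G) (S : Subobject W) : Subobject W.right :=
  haveI := JH.mono_right_of_mono F G S.arrow
  Subobject.mk S.arrow.right

lemma JH.rSub_monotone (W : Comma F G) : Monotone (JH.rSub F G W) := by
  intro S T h
  haveI := JH.mono_right_of_mono F G S.arrow
  haveI := JH.mono_right_of_mono F G T.arrow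
  refine Subobject.mk_le_mk_of_comm (Subobject.ofLE S T h).right ?_
  rw [← Comma.comp_right, Subobject.ofLE_arrow]

lemma JH.rSub_bot (W : Comma F G) : JH.rSub F G W ⊥ = ⊥ := by
  haveI := JH.mono_right_of_mono F G (⊥ : Subobject W).arrow
  exact JH.mk_eq_bot_of_isZero _
    ((JH.isZero_comma_iff F G _).1 (JH.isZero_bot_subobject W)).2

lemma JH.rSub_top (W : Comma F G) : JH.rSub F G W ⊤ = ⊤ := by
  haveI := JH.mono_right_of_mono F G (⊤ : Subobject W).arrow
  haveI : IsIso ((⊤ : Subobject W).arrow.right) :=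
    JH.isIso_right_of_isIso F G _ inferInstance
  exact Subobject.mk_eq_top_of_isIso _

lemma JH.rSub_simple (W : Comma F G) (hz : IsZero W.left) {S T : Subobject W} (h : S ≤ T)
    (hs : Simple (subQuot h)) : Simple (subQuot (JH.rSub_monotone F G W h)) := by
  haveI := JH.mono_right_of_mono F G S.arrow
  haveI := JH.mono_right_of_mono F G T.arrow
  haveI := JH.mono_left_of_mono F G T.arrow
  set g := Subobject.ofLE S T h with hg
  haveI : Simple (cokernel g) := hs
  have hcs : Simple (JH.commaCoker F G g) := Simple.of_iso (JH.cokernelCommaIso F G g).symm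
  have hTz : IsZero ((T : Comma F G).left) :=
    IsZero.of_mono_eq_zero (T.arrow.left) (hz.eq_of_tgt _ _)
  have hzc : IsZero (cokernel g.left) := JH.isZero_cokernel_of_isZero_tgt hTz g.left
  haveI hsr : Simple (cokernel g.right) := (JH.simple_iff_right F G hzc).1 hcs
  exact Simple.of_iso (JH.subQuotMkIso S.arrow.right T.arrow.right g.right
    (by rw [← Comma.comp_right, hg, Subobject.ofLE_arrow]) _)

/-- Objects of the form `(0, Q)` in the comma category. -/
@[simps]
noncomputable abbrev JH.jObj (Q : B) : Comma F G where
  left := 0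
  right := Q
  hom := 0

/-- Monomorphisms of the form `(0, q)` into `W`. -/
@[simps]
noncomputable def JH.jHom (W : Comma F G) {Q : B} (q : Q ⟶ W.right) : JH.jObj F G Q ⟶ W where
  left := 0
  right := q
  w := (JH.map_isZero_right_exact F (isZero_zero A)).eq_of_src _ _

lemma JH.jHom_mono (W : Comma F G) {Q : B} (q : Q ⟶ W.right) [Mono q] :
    Mono (JH.jHom F G W q) :=
  JH.mono_of_components F G _ (JH.mono_of_src_isZero (isZero_zero A) _) ‹Mono q›

/-- The subobject `(0, P)` of `W` associated to a subobject `P` of `W.right`. -/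
noncomputable def JH.jSub (W : Comma F G) (P : Subobject W.right) : Subobject W :=
  haveI := JH.jHom_mono F G W P.arrow
  Subobject.mk (JH.jHom F G W P.arrow)

lemma JH.jSub_monotone (W : Comma F G) : Monotone (JH.jSub F G W) := by
  intro P Q h
  haveI := JH.jHom_mono F G W P.arrow
  haveI := JH.jHom_mono F G W Q.arrow
  refine Subobject.mk_le_mk_of_comm
    ⟨𝟙 (0 : A), Subobject.ofLE P Q h,
      (JH.map_isZero_right_exact F (isZero_zero A)).eq_of_src _ _⟩ ?_
  apply CommaMorphism.ext
  · exact (isZero_zero A).eq_of_src _ _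
  · simp only [Comma.comp_right, JH.jHom_right]
    exact Subobject.ofLE_arrow h

lemma JH.jSub_bot (W : Comma F G) : JH.jSub F G W ⊥ = ⊥ := by
  haveI := JH.jHom_mono F G W (⊥ : Subobject W.right).arrow
  exact JH.mk_eq_bot_of_isZero _
    ((JH.isZero_comma_iff F G _).2 ⟨isZero_zero A, JH.isZero_bot_subobject W.right⟩)

lemma JH.jSub_simple (W : Comma F G) {P Q : Subobject W.right} (h : P ≤ Q)
    (hs : Simple (subQuot h)) : Simple (subQuot (JH.jSub_monotone F G W h)) := by
  haveI := JH.jHom_mono F G W P.arrow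
  haveI := JH.jHom_mono F G W Q.arrow
  set u : JH.jObj F G (P : B) ⟶ JH.jObj F G (Q : B) :=
    ⟨𝟙 (0 : A), Subobject.ofLE P Q h,
      (JH.map_isZero_right_exact F (isZero_zero A)).eq_of_src _ _⟩ with hu
  have w : u ≫ JH.jHom F G W Q.arrow = JH.jHom F G W P.arrow := by
    apply CommaMorphism.ext
    · exact (isZero_zero A).eq_of_src _ _
    · simp only [hu, Comma.comp_right, JH.jHom_right]
      exact Subobject.ofLE_arrow h
  have hzl : IsZero (cokernel u.left) :=
    JH.isZero_cokernel_of_isZero_tgt (isZero_zero A) u.left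
  haveI : Simple (cokernel u.right) := hs
  have hsc : Simple (JH.commaCoker F G u) :=
    (JH.simple_iff_right F G hzl).2 (by exact hs)
  haveI : Simple (cokernel u) := Simple.of_iso (JH.cokernelCommaIso F G u)
  exact Simple.of_iso (JH.subQuotMkIso (JH.jHom F G W P.arrow) (JH.jHom F G W Q.arrow) u w _)

/-- Objects of the form `(P, W.right)` over `W` in the comma category. -/
@[simps]
noncomputable abbrev JH.kObj (W : Comma F G) {P : A} (p : P ⟶ W.left) : Comma F G where
  left := P
  right := W.right
  hom := F.map p ≫ W.hom

/-- Monomorphisms of the form `(p, 𝟙)` into `W`. -/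
@[simps]
noncomputable def JH.kHom (W : Comma F G) {P : A} (p : P ⟶ W.left) : JH.kObj F G W p ⟶ W where
  left := p
  right := 𝟙 W.right
  w := by simp [JH.kObj]

lemma JH.kHom_mono (W : Comma F G) {P : A} (p : P ⟶ W.left) [Mono p] :
    Mono (JH.kHom F G W p) :=
  JH.mono_of_components F G _ ‹Mono p› (show Mono (𝟙 W.right) from inferInstance)

/-- The subobject `(P, W.right)` of `W` associated to a subobject `P` of `W.left`. -/
noncomputable def JH.kSub (W : Comma F G) (P : Subobject W.left) : Subobject W :=
  haveI := JH.kHom_mono F G W P.arrow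
  Subobject.mk (JH.kHom F G W P.arrow)

lemma JH.kSub_monotone (W : Comma F G) : Monotone (JH.kSub F G W) := by
  intro P Q h
  haveI := JH.kHom_mono F G W P.arrow
  haveI := JH.kHom_mono F G W Q.arrow
  refine Subobject.mk_le_mk_of_comm
    ⟨Subobject.ofLE P Q h, 𝟙 W.right, ?_⟩ ?_
  · simp [← Functor.map_comp_assoc, Subobject.ofLE_arrow]
  · apply CommaMorphism.ext
    · simp [Subobject.ofLE_arrow]
    · simp

lemma JH.kSub_top (W : Comma F G) : JH.kSub F G W ⊤ = ⊤ := by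
  haveI := JH.kHom_mono F G W (⊤ : Subobject W.left).arrow
  haveI : IsIso (JH.kHom F G W (⊤ : Subobject W.left).arrow) :=
    JH.isIso_of_components F G _
      (show IsIso ((⊤ : Subobject W.left).arrow) from inferInstance)
      (show IsIso (𝟙 W.right) from inferInstance)
  exact Subobject.mk_eq_top_of_isIso _

lemma JH.jSub_top_eq_kSub_bot (W : Comma F G) :
    JH.jSub F G W ⊤ = JH.kSub F G W ⊥ := by
  haveI := JH.jHom_mono F G W (⊤ : Subobject W.right).arrow
  haveI := JH.kHom_mono F G W (⊥ : Subobject W.left).arrow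
  apply le_antisymm
  · refine Subobject.mk_le_mk_of_comm
      ⟨0, (⊤ : Subobject W.right).arrow,
        (JH.map_isZero_right_exact F (isZero_zero A)).eq_of_src _ _⟩ ?_
    apply CommaMorphism.ext
    · exact (isZero_zero A).eq_of_src _ _
    · simp
  · refine Subobject.mk_le_mk_of_comm
      ⟨0, inv (⊤ : Subobject W.right).arrow,
        (JH.map_isZero_right_exact F (JH.isZero_bot_subobject W.left)).eq_of_src _ _⟩ ?_
    apply CommaMorphism.ext
    · exact (JH.isZero_bot_subobject W.left).eq_of_src _ _
    · simp

lemma JH.kSub_simple (W : Comma F G) {P Q : Subobject W.left} (h : P ≤ Q)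
    (hs : Simple (subQuot h)) : Simple (subQuot (JH.kSub_monotone F G W h)) := by
  haveI := JH.kHom_mono F G W P.arrow
  haveI := JH.kHom_mono F G W Q.arrow
  set u : JH.kObj F G W (P.arrow) ⟶ JH.kObj F G W (Q.arrow) :=
    ⟨Subobject.ofLE P Q h, 𝟙 W.right, by
      simp [← Functor.map_comp_assoc, Subobject.ofLE_arrow]⟩ with hu
  have w : u ≫ JH.kHom F G W Q.arrow = JH.kHom F G W P.arrow := by
    apply CommaMorphism.ext
    · simp [hu, Subobject.ofLE_arrow]
    · simp [hu]
  have hzr : IsZero (cokernel u.right) := by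
    haveI : Epi u.right := show Epi (𝟙 W.right) from inferInstance
    exact JH.isZero_cokernel_of_epi u.right
  haveI : Simple (cokernel u.left) := hs
  have hsc : Simple (JH.commaCoker F G u) :=
    (JH.simple_iff_left F G hzr).2 (by exact hs)
  haveI : Simple (cokernel u) := Simple.of_iso (JH.cokernelCommaIso F G u)
  exact Simple.of_iso (JH.subQuotMkIso (JH.kHom F G W P.arrow) (JH.kHom F G W Q.arrow) u w _)

end CommaSubobjects

/-- Let `A`, `B`, `C` be abelian categories, `F : A ⥤ C` right exact, `G : B ⥤ C`
left exact (so `Comma F G` is abelian). Every object of `A` and every object of `B`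
admits a Jordan–Hölder filtration if and only if every object of the comma category
`Comma F G` admits a Jordan–Hölder filtration. -/
theorem comma_jordanHolder_iff {A B C : Type*} [Category A] [Category B] [Category C]
    [Abelian A] [Abelian B] [Abelian C]
    (F : A ⥤ C) [PreservesFiniteColimits F] (G : B ⥤ C) [PreservesFiniteLimits G]
    [Abelian (Comma F G)] :
    ((∀ X : A, HasJHFiltration X) ∧ (∀ Y : B, HasJHFiltration Y)) ↔
      (∀ W : Comma F G, HasJHFiltration W) := by
  constructor
  · rintro ⟨hA, hB⟩ W
    obtain ⟨m, b, hb, hb0, hbT, sb⟩ := hB W.right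
    obtain ⟨n, a, ha, ha0, haT, sa⟩ := hA W.left
    refine JH.glue (fun i => JH.jSub F G W (b i)) (fun i => JH.kSub F G W (a i))
      ((JH.jSub_monotone F G W).comp hb) ((JH.kSub_monotone F G W).comp ha) ?_ ?_ ?_ ?_ ?_
    · show JH.jSub F G W (b (Fin.last m)) = JH.kSub F G W (a 0)
      rw [hbT, ha0]
      exact JH.jSub_top_eq_kSub_bot F G W
    · show JH.jSub F G W (b 0) = ⊥
      rw [hb0]
      exact JH.jSub_bot F G W
    · show JH.kSub F G W (a (Fin.last n)) = ⊤
      rw [haT]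
      exact JH.kSub_top F G W
    · intro i
      exact JH.jSub_simple F G W _ (sb i)
    · intro i
      exact JH.kSub_simple F G W _ (sa i)
  · intro h
    constructor
    · intro X
      obtain ⟨n, c, hc, h0, hT, sc⟩ := h { left := X, right := 0, hom := 0 }
      refine ⟨n, fun i => JH.lSub F G _ (c i), (JH.lSub_monotone F G _).comp hc, ?_, ?_, ?_⟩
      · show JH.lSub F G _ (c 0) = ⊥
        rw [h0]
        exact JH.lSub_bot F G _
      · show JH.lSub F G _ (c (Fin.last n)) = ⊤
        rw [hT]
        exact JH.lSub_top F G _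
      · intro i
        exact JH.lSub_simple F G _ (isZero_zero B) _ (sc i)
    · intro Y
      obtain ⟨n, c, hc, h0, hT, sc⟩ := h { left := 0, right := Y, hom := 0 }
      refine ⟨n, fun i => JH.rSub F G _ (c i), (JH.rSub_monotone F G _).comp hc, ?_, ?_, ?_⟩
      · show JH.rSub F G _ (c 0) = ⊥
        rw [h0]
        exact JH.rSub_bot F G _
      · show JH.rSub F G _ (c (Fin.last n)) = ⊤
        rw [hT]
        exact JH.rSub_top F G _
      · intro i
        exact JH.rSub_simple F G _ (isZero_zero A) _ (sc i)
end
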